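/- arXiv:2001.01542 — 6 statements merged into one kernel-verified Lean document; each statement's English description precedes it below -/
import Mathlib

section
/- Let L be an 𝓞-lattice in V, so that L/𝓜L is an n-dimensional K₁-vector space. For an 𝕆-lattice L̃ with [𝓞·L̃] = [L], choose a ∈ K^× with a·(𝓞·L̃) = L; then 𝓜L ⊆ a·L̃, the image (a·L̃)/𝓜L is an 𝓞₁-lattice of L/𝓜L, and its homothety class in I^L(SL(L/𝓜L), ω₀) depends only on the class [L̃]. The resulting map Res_L: π^{-1}([L]) → I^L(SL(L/𝓜L), ω₀), [L̃] ↦ [(a·L̃)/𝓜L], is a bijection, and it is SL(L/𝓜L)-equivariant: Res_L([g(L̃)]) = ḡ·Res_L([L̃]) for every g ∈ SL(L) := {g ∈ SL(V) : g(L) = L}, where ḡ ∈ SL(L/𝓜L) denotes the reduction of g. -/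
section LatticeSetup

variable {K Λ V : Type*} [Field K] [AddCommGroup Λ] [LinearOrder Λ] [IsOrderedAddMonoid Λ]
  [AddCommGroup V] [Module K V]

/-- `𝕆 = {x ∈ K : ω(x) ≥ 0}`, the ring of integers of `ω`. -/
def OO (ω : AddValuation K (WithTop Λ)) : Set K := {x : K | 0 ≤ ω x}

/-- `𝓞 = {x ∈ K : ω₁(x) ≥ 0}`, where `ω₁` is the composite of `ω` with the projection
`Λ → Λ/Λ₀`: concretely, `ω₁(x) ≥ 0` iff `ω(x) ≥ c` for some `c ∈ Λ₀`. -/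
def Obig (ω : AddValuation K (WithTop Λ)) (Λ₀ : AddSubgroup Λ) : Set K :=
  {x : K | ∃ c ∈ Λ₀, (c : WithTop Λ) ≤ ω x}

/-- `𝓜 = {x ∈ K : ω₁(x) > 0}`: concretely, `ω(x) > c` for every `c ∈ Λ₀`. -/
def Mbig (ω : AddValuation K (WithTop Λ)) (Λ₀ : AddSubgroup Λ) : Set K :=
  {x : K | ∀ c ∈ Λ₀, (c : WithTop Λ) < ω x}

/-- `L` is an `S`-lattice in `V`: `L = S·b₁ ⊕ ⋯ ⊕ S·bₙ` for some `K`-basis `b` of `V`. -/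
def IsLat (n : ℕ) (S : Set K) (L : Set V) : Prop :=
  ∃ b : Module.Basis (Fin n) K V,
    L = {v : V | ∃ c : Fin n → K, (∀ i, c i ∈ S) ∧ v = ∑ i, c i • b i}

/-- the `S`-submodule of `V` generated by `L` (set of finite `S`-linear combinations). -/
def SpanBy (S : Set K) (L : Set V) : Set V :=
  {v : V | ∃ (m : ℕ) (c : Fin m → K) (x : Fin m → V),
    (∀ i, c i ∈ S) ∧ (∀ i, x i ∈ L) ∧ v = ∑ i, c i • x i}

/-- homothety relation: `L' = a • L` for some `a ∈ K^×`. -/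
def Homo (L L' : Set V) : Prop := ∃ a : K, a ≠ 0 ∧ L' = (fun v => a • v) '' L

end LatticeSetup

set_option linter.unusedSectionVars false
set_option linter.unusedVariables false
set_option maxHeartbeats 1000000

namespace St4

open Module

variable {K Λ : Type*} [Field K] [AddCommGroup Λ] [LinearOrder Λ] [IsOrderedAddMonoid Λ]
variable (ω : AddValuation K (WithTop Λ)) (Λ₀ : AddSubgroup Λ)

lemma val_coe {x : K} (hx : x ≠ 0) : ∃ l : Λ, ω x = (l : WithTop Λ) := by
  have := (ω.ne_top_iff).2 hx
  cases h : ω x with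
  | top => exact absurd h this
  | coe l => exact ⟨l, rfl⟩

variable {ω Λ₀}

lemma OO_subset_Obig : OO ω ⊆ Obig ω Λ₀ := fun x hx => ⟨0, zero_mem _, by simpa [OO] using hx⟩

lemma zero_mem_OO : (0:K) ∈ OO ω := by simp [OO]

lemma one_mem_OO : (1:K) ∈ OO ω := by simp [OO]

lemma zero_mem_Obig : (0:K) ∈ Obig ω Λ₀ := OO_subset_Obig zero_mem_OO

lemma one_mem_Obig : (1:K) ∈ Obig ω Λ₀ := OO_subset_Obig one_mem_OO

lemma Mbig_subset_OO : Mbig ω Λ₀ ⊆ OO ω := fun x hx => by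
  have := hx 0 (zero_mem _)
  simpa [OO] using this.le

lemma Mbig_subset_Obig : Mbig ω Λ₀ ⊆ Obig ω Λ₀ := Mbig_subset_OO.trans OO_subset_Obig

lemma zero_mem_Mbig : (0:K) ∈ Mbig ω Λ₀ := fun c _ => by
  simp only [AddValuation.map_zero]
  exact WithTop.coe_lt_top c

lemma add_mem_Obig {x y : K} (hx : x ∈ Obig ω Λ₀) (hy : y ∈ Obig ω Λ₀) :
    x + y ∈ Obig ω Λ₀ := by
  obtain ⟨c, hc, hcx⟩ := hx
  obtain ⟨c', hc', hcy⟩ := hy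
  rcases le_total c c' with h | h
  · exact ⟨c, hc, le_trans (le_min hcx (le_trans (WithTop.coe_le_coe.2 h) hcy)) (ω.map_add x y)⟩
  · exact ⟨c', hc', le_trans (le_min (le_trans (WithTop.coe_le_coe.2 h) hcx) hcy) (ω.map_add x y)⟩

lemma neg_mem_Obig {x : K} (hx : x ∈ Obig ω Λ₀) : -x ∈ Obig ω Λ₀ := by
  obtain ⟨c, hc, hcx⟩ := hx
  exact ⟨c, hc, by rwa [ω.map_neg]⟩

lemma mul_mem_Obig {x y : K} (hx : x ∈ Obig ω Λ₀) (hy : y ∈ Obig ω Λ₀) :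
    x * y ∈ Obig ω Λ₀ := by
  obtain ⟨c, hc, hcx⟩ := hx
  obtain ⟨c', hc', hcy⟩ := hy
  refine ⟨c + c', add_mem hc hc', ?_⟩
  rw [ω.map_mul, WithTop.coe_add]
  exact add_le_add hcx hcy

lemma add_mem_OO {x y : K} (hx : x ∈ OO ω) (hy : y ∈ OO ω) : x + y ∈ OO ω :=
  le_trans (le_min hx hy) (ω.map_add x y)

lemma mul_mem_OO {x y : K} (hx : x ∈ OO ω) (hy : y ∈ OO ω) : x * y ∈ OO ω := by
  have : (0:WithTop Λ) + 0 ≤ ω x + ω y := add_le_add hx hy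
  simpa [OO, ω.map_mul] using this

lemma neg_mem_OO {x : K} (hx : x ∈ OO ω) : -x ∈ OO ω := by
  simpa [OO, ω.map_neg] using hx

lemma add_mem_Mbig {x y : K} (hx : x ∈ Mbig ω Λ₀) (hy : y ∈ Mbig ω Λ₀) :
    x + y ∈ Mbig ω Λ₀ := fun c hc =>
  lt_of_lt_of_le (lt_min (hx c hc) (hy c hc)) (ω.map_add x y)

lemma mul_mem_Mbig {x y : K} (hx : x ∈ Mbig ω Λ₀) (hy : y ∈ Obig ω Λ₀) :
    x * y ∈ Mbig ω Λ₀ := by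
  intro c hc
  obtain ⟨c', hc', hcy⟩ := hy
  by_cases h0 : x * y = 0
  · rw [h0, ω.map_zero]; exact WithTop.coe_lt_top c
  have hx0 : x ≠ 0 := fun h => h0 (by simp [h])
  have hy0 : y ≠ 0 := fun h => h0 (by simp [h])
  obtain ⟨lx, hlx⟩ := val_coe ω hx0
  obtain ⟨ly, hly⟩ := val_coe ω hy0
  have h1 : (c - c' : Λ) < lx := by
    have := hx (c - c') (sub_mem hc hc'); rw [hlx] at this; exact_mod_cast this
  have h2 : c' ≤ ly := by rw [hly] at hcy; exact_mod_cast hcy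
  rw [ω.map_mul, hlx, hly, ← WithTop.coe_add, WithTop.coe_lt_coe]
  have : (c - c') + c' < lx + ly := add_lt_add_of_lt_of_le h1 h2
  simpa using this

lemma sub_mem_Obig {x y : K} (hx : x ∈ Obig ω Λ₀) (hy : y ∈ Obig ω Λ₀) :
    x - y ∈ Obig ω Λ₀ := by
  rw [sub_eq_add_neg]; exact add_mem_Obig hx (neg_mem_Obig hy)

/-- if `u ∈ 𝓞`, `u⁻¹ ∈ 𝓞`, `u ≠ 0` then `u ∉ 𝓜` (and symmetrically). -/
lemma not_mem_Mbig_of_inv {u : K} (hu0 : u ≠ 0) (hu : u ∈ Obig ω Λ₀)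
    (hui : u⁻¹ ∈ Obig ω Λ₀) : u ∉ Mbig ω Λ₀ := by
  obtain ⟨l, hl⟩ := val_coe ω hu0
  obtain ⟨c', hc', hcu⟩ := hui
  have hinv : ω u⁻¹ = ((-l : Λ) : WithTop Λ) := by rw [ω.map_inv, hl]; rfl
  rw [hinv, WithTop.coe_le_coe] at hcu
  intro hM
  have := hM (-c') (neg_mem hc')
  rw [hl, WithTop.coe_lt_coe] at this
  -- this : -c' < l, hcu : c' ≤ -l
  have h2 : l ≤ -c' := by simpa using neg_le_neg hcu
  exact absurd (lt_of_lt_of_le this h2) (lt_irrefl _)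


lemma sum_mem_Obig {ι : Type*} {s : Finset ι} {f : ι → K}
    (h : ∀ i ∈ s, f i ∈ Obig ω Λ₀) : (∑ i ∈ s, f i) ∈ Obig ω Λ₀ :=
  Finset.sum_induction f (· ∈ Obig ω Λ₀) (fun _ _ ha hb => add_mem_Obig ha hb)
    zero_mem_Obig h

lemma inv_mem_of_not_mem_Mbig {u : K} (hu : u ∈ Obig ω Λ₀) (hM : u ∉ Mbig ω Λ₀) :
    u ≠ 0 ∧ u⁻¹ ∈ Obig ω Λ₀ ∧ u⁻¹ ∉ Mbig ω Λ₀ := by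
  obtain ⟨c', hc', hle⟩ : ∃ c' ∈ Λ₀, ω u ≤ (c' : WithTop Λ) := by
    by_contra h
    push_neg at h
    exact hM (fun c hc => (h c hc))
  have hu0 : u ≠ 0 := by
    intro h; rw [h, ω.map_zero] at hle
    exact absurd hle (by simp)
  obtain ⟨l, hl⟩ := val_coe ω hu0
  obtain ⟨c, hc, hcl⟩ := hu
  rw [hl, WithTop.coe_le_coe] at hle hcl
  have hinv : ω u⁻¹ = ((-l : Λ) : WithTop Λ) := by rw [ω.map_inv, hl]; rfl
  refine ⟨hu0, ⟨-c', neg_mem hc', by rw [hinv, WithTop.coe_le_coe]; exact neg_le_neg hle⟩, ?_⟩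
  intro hMi
  have := hMi (-c) (neg_mem hc)
  rw [hinv, WithTop.coe_lt_coe] at this
  exact absurd (neg_le_neg hcl) (not_le_of_gt this)

variable {V : Type*} [AddCommGroup V] [Module K V] {n : ℕ}

  [AddCommGroup V] [Module K V] {n : ℕ}

/-- the set of `S`-combinations of the family `b`. -/
def latSet (S : Set K) (b : Fin n → V) : Set V :=
  {v : V | ∃ c : Fin n → K, (∀ i, c i ∈ S) ∧ v = ∑ i, c i • b i}

lemma isLat_iff {S : Set K} {L : Set V} :
    IsLat n S L ↔ ∃ b : Basis (Fin n) K V, L = latSet S ⇑b := Iff.rfl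

lemma mem_latSet_basis {S : Set K} (b : Basis (Fin n) K V) {v : V} :
    v ∈ latSet S ⇑b ↔ ∀ i, b.repr v i ∈ S := by
  constructor
  · rintro ⟨c, hc, rfl⟩ i
    rw [b.repr_sum_self]; exact hc i
  · intro h
    exact ⟨fun i => b.repr v i, h, (b.sum_repr v).symm⟩

lemma latSet_mono {S T : Set K} (h : S ⊆ T) (b : Fin n → V) : latSet S b ⊆ latSet T b :=
  fun _ ⟨c, hc, hv⟩ => ⟨c, fun i => h (hc i), hv⟩

lemma basis_mem_latSet {S : Set K} (h0 : (0:K) ∈ S) (h1 : (1:K) ∈ S)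
    (b : Basis (Fin n) K V) (i : Fin n) : b i ∈ latSet S ⇑b := by
  rw [mem_latSet_basis]
  intro j
  rw [Basis.repr_self_apply]
  split <;> assumption

/-- rearrangement: `∑ j, t j • (∑ i, A j i • b i) = ∑ i, (∑ j, t j * A j i) • b i`. -/
lemma sum_smul_sum {m : ℕ} (t : Fin m → K) (A : Fin m → Fin n → K) (b : Fin n → V) :
    ∑ j, t j • (∑ i, A j i • b i) = ∑ i, (∑ j, t j * A j i) • b i := by
  simp_rw [Finset.smul_sum, smul_smul]
  rw [Finset.sum_comm]
  simp_rw [Finset.sum_smul]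

/-- image of a latSet under scalar multiplication. -/
lemma smul_image_latSet {S : Set K} (a : K) (b : Fin n → V) :
    (fun v => a • v) '' latSet S b = latSet S (fun i => a • b i) := by
  ext v
  constructor
  · rintro ⟨w, ⟨c, hc, rfl⟩, rfl⟩
    refine ⟨c, hc, ?_⟩
    show a • ∑ i, c i • b i = _
    rw [Finset.smul_sum]; exact Finset.sum_congr rfl fun i _ => smul_comm _ _ _
  · rintro ⟨c, hc, rfl⟩
    refine ⟨∑ i, c i • b i, ⟨c, hc, rfl⟩, ?_⟩
    show a • ∑ i, c i • b i = _
    rw [Finset.smul_sum]; exact Finset.sum_congr rfl fun i _ => (smul_comm _ _ _)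


/-- partial sums with coefficients in `S` stay in the latSet (needs `0 ∈ S`). -/
lemma partial_sum_mem_latSet {S : Set K} (h0 : (0:K) ∈ S) {c : Fin n → K}
    (hc : ∀ i, c i ∈ S) (b : Fin n → V) (s : Finset (Fin n)) :
    (∑ i ∈ s, c i • b i) ∈ latSet S b := by
  refine ⟨fun i => if i ∈ s then c i else 0, fun i => ?_, ?_⟩
  · dsimp only; split
    · exact hc i
    · exact h0
  · simp only [ite_smul, zero_smul]
    rw [Finset.sum_ite_mem, Finset.univ_inter]

lemma add_mem_latSet {S : Set K} (hS : ∀ x ∈ S, ∀ y ∈ S, x + y ∈ S)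
    {b : Fin n → V} {v w : V} (hv : v ∈ latSet S b) (hw : w ∈ latSet S b) :
    v + w ∈ latSet S b := by
  obtain ⟨c, hc, rfl⟩ := hv
  obtain ⟨c', hc', rfl⟩ := hw
  exact ⟨fun i => c i + c' i, fun i => hS _ (hc i) _ (hc' i),
    by rw [← Finset.sum_add_distrib]; exact Finset.sum_congr rfl fun i _ => (add_smul _ _ _).symm⟩

lemma sub_mem_latSet {S : Set K} (hS : ∀ x ∈ S, ∀ y ∈ S, x - y ∈ S)
    {b : Fin n → V} {v w : V} (hv : v ∈ latSet S b) (hw : w ∈ latSet S b) :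
    v - w ∈ latSet S b := by
  obtain ⟨c, hc, rfl⟩ := hv
  obtain ⟨c', hc', rfl⟩ := hw
  exact ⟨fun i => c i - c' i, fun i => hS _ (hc i) _ (hc' i),
    by rw [← Finset.sum_sub_distrib]; exact Finset.sum_congr rfl fun i _ => (sub_smul _ _ _).symm⟩

/-- `SpanBy` commutes with scalar-multiplication images. -/
lemma spanBy_smul_image (S : Set K) (a : K) (L : Set V) :
    SpanBy S ((fun v => a • v) '' L) = (fun v => a • v) '' SpanBy S L := by
  ext v
  constructor
  · rintro ⟨m, c, x, hc, hx, rfl⟩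
    choose y hy hxy using hx
    refine ⟨∑ i, c i • y i, ⟨m, c, y, hc, hy, rfl⟩, ?_⟩
    show a • _ = _
    rw [Finset.smul_sum]
    exact (Finset.sum_congr rfl fun i _ => by rw [← hxy i]; exact (smul_comm _ _ _).symm).symm
  · rintro ⟨w, ⟨m, c, x, hc, hx, rfl⟩, rfl⟩
    refine ⟨m, c, fun i => a • x i, hc, fun i => ⟨x i, hx i, rfl⟩, ?_⟩
    show a • _ = _
    rw [Finset.smul_sum]
    exact Finset.sum_congr rfl fun i _ => smul_comm _ _ _

/-- `SpanBy` commutes with images under a linear equivalence. -/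
lemma spanBy_equiv_image (S : Set K) (g : V ≃ₗ[K] V) (L : Set V) :
    SpanBy S ((fun v => g v) '' L) = (fun v => g v) '' SpanBy S L := by
  ext v
  constructor
  · rintro ⟨m, c, x, hc, hx, rfl⟩
    choose y hy hxy using hx
    refine ⟨∑ i, c i • y i, ⟨m, c, y, hc, hy, rfl⟩, ?_⟩
    show g _ = _
    rw [map_sum]
    exact (Finset.sum_congr rfl fun i _ => by rw [← hxy i]; exact (map_smul g _ _).symm).symm
  · rintro ⟨w, ⟨m, c, x, hc, hx, rfl⟩, rfl⟩
    refine ⟨m, c, fun i => g (x i), hc, fun i => ⟨x i, hx i, rfl⟩, ?_⟩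
    show g _ = _
    rw [map_sum]
    exact Finset.sum_congr rfl fun i _ => map_smul g _ _



variable {ω : AddValuation K (WithTop Λ)} {Λ₀ : AddSubgroup Λ}

/-- coordinates of an element of `SpanBy 𝓞 X` when `X ⊆ latSet S b`, `S ⊆ 𝓞`. -/
lemma spanBy_Obig_latSet {S : Set K} (hS : S ⊆ Obig ω Λ₀) (h0 : (0:K) ∈ S) (h1 : (1:K) ∈ S)
    (b : Basis (Fin n) K V) :
    SpanBy (Obig ω Λ₀) (latSet S ⇑b) = latSet (Obig ω Λ₀) ⇑b := by
  apply Set.Subset.antisymm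
  · rintro v ⟨m, c, x, hc, hx, rfl⟩
    rw [mem_latSet_basis]
    intro i
    have : b.repr (∑ j, c j • x j) i = ∑ j, c j * b.repr (x j) i := by
      rw [map_sum]
      rw [Finsupp.finset_sum_apply]
      exact Finset.sum_congr rfl fun j _ => by rw [map_smul]; rfl
    rw [this]
    refine Finset.sum_induction _ (· ∈ Obig ω Λ₀) (fun _ _ ha hb => add_mem_Obig ha hb)
      zero_mem_Obig (fun j _ => mul_mem_Obig (hc j) ?_)
    have := (mem_latSet_basis b).1 (hx j)
    exact hS (this i)
  · rintro v hv
    rw [mem_latSet_basis] at hv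
    exact ⟨n, fun i => b.repr v i, ⇑b, hv, fun i => basis_mem_latSet h0 h1 b i,
      (b.sum_repr v).symm⟩

/-- `𝓜·L = latSet 𝓜 b` when `L = latSet 𝓞 b`. -/
lemma spanBy_Mbig_latSet (b : Basis (Fin n) K V) :
    SpanBy (Mbig ω Λ₀) (latSet (Obig ω Λ₀) ⇑b) = latSet (Mbig ω Λ₀) ⇑b := by
  apply Set.Subset.antisymm
  · rintro v ⟨m, c, x, hc, hx, rfl⟩
    rw [mem_latSet_basis]
    intro i
    have : b.repr (∑ j, c j • x j) i = ∑ j, c j * b.repr (x j) i := by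
      rw [map_sum, Finsupp.finset_sum_apply]
      exact Finset.sum_congr rfl fun j _ => by rw [map_smul]; rfl
    rw [this]
    refine Finset.sum_induction _ (· ∈ Mbig ω Λ₀) (fun _ _ ha hb => add_mem_Mbig ha hb)
      zero_mem_Mbig (fun j _ => mul_mem_Mbig (hc j) ?_)
    exact (mem_latSet_basis b).1 (hx j) i
  · rintro v hv
    rw [mem_latSet_basis] at hv
    exact ⟨n, fun i => b.repr v i, ⇑b, hv,
      fun i => basis_mem_latSet zero_mem_Obig one_mem_Obig b i, (b.sum_repr v).symm⟩


section Quotient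
variable {K1 : Type*} [Field K1] {W : Type*} [AddCommGroup W] [Module K1 W]
variable {res : K → K1} {q : V → W} {L : Set V}

lemma zero_mem_L (b : Basis (Fin n) K V) (hLb : L = latSet (Obig ω Λ₀) ⇑b) : (0:V) ∈ L := by
  rw [hLb]
  exact ⟨fun _ => 0, fun _ => zero_mem_Obig, by simp⟩

lemma q_zero (b : Basis (Fin n) K V) (hLb : L = latSet (Obig ω Λ₀) ⇑b)
    (hq_add : ∀ x ∈ L, ∀ y ∈ L, q (x + y) = q x + q y) : q 0 = 0 := by
  have h0 := zero_mem_L b hLb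
  have := hq_add 0 h0 0 h0
  rw [add_zero] at this
  exact left_eq_add.1 this

lemma q_sum (b : Basis (Fin n) K V) (hLb : L = latSet (Obig ω Λ₀) ⇑b)
    (hq_add : ∀ x ∈ L, ∀ y ∈ L, q (x + y) = q x + q y)
    (hq_smul : ∀ r ∈ Obig ω Λ₀, ∀ x ∈ L, q (r • x) = res r • q x)
    {c : Fin n → K} (hc : ∀ i, c i ∈ Obig ω Λ₀) (s : Finset (Fin n)) :
    q (∑ i ∈ s, c i • b i) = ∑ i ∈ s, res (c i) • q (b i) := by
  induction s using Finset.induction_on with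
  | empty => simpa using q_zero b hLb hq_add
  | @insert a s ha ih =>
    rw [Finset.sum_insert ha, Finset.sum_insert ha]
    have hbmem : ∀ i, b i ∈ L := fun i => hLb ▸ basis_mem_latSet zero_mem_Obig one_mem_Obig b i
    have h1 : c a • b a ∈ L := hLb ▸ (by
      have := partial_sum_mem_latSet (S := Obig ω Λ₀) zero_mem_Obig hc ⇑b {a}
      rwa [Finset.sum_singleton] at this)
    have h2 : (∑ i ∈ s, c i • b i) ∈ L := hLb ▸ partial_sum_mem_latSet zero_mem_Obig hc ⇑b s
    rw [hq_add _ h1 _ h2, ih, hq_smul _ (hc a) _ (hbmem a)]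

lemma q_repr (b : Basis (Fin n) K V) (hLb : L = latSet (Obig ω Λ₀) ⇑b)
    (hq_add : ∀ x ∈ L, ∀ y ∈ L, q (x + y) = q x + q y)
    (hq_smul : ∀ r ∈ Obig ω Λ₀, ∀ x ∈ L, q (r • x) = res r • q x)
    {v : V} (hv : v ∈ L) : q v = ∑ i, res (b.repr v i) • q (b i) := by
  have hco : ∀ i, b.repr v i ∈ Obig ω Λ₀ := (mem_latSet_basis b).1 (hLb ▸ hv)
  have := q_sum b hLb hq_add hq_smul hco Finset.univ
  rwa [b.sum_repr v] at this

lemma exists_qbasis (b : Basis (Fin n) K V) (hLb : L = latSet (Obig ω Λ₀) ⇑b)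
    (hq_add : ∀ x ∈ L, ∀ y ∈ L, q (x + y) = q x + q y)
    (hq_smul : ∀ r ∈ Obig ω Λ₀, ∀ x ∈ L, q (r • x) = res r • q x)
    (hq_surj : ∀ w : W, ∃ x ∈ L, q x = w)
    (hq_ker : ∀ x ∈ L, (q x = 0 ↔ x ∈ SpanBy (Mbig ω Λ₀) L))
    (hres_surj : ∀ t : K1, ∃ x ∈ Obig ω Λ₀, res x = t)
    (hres_ker : ∀ x ∈ Obig ω Λ₀, (res x = 0 ↔ x ∈ Mbig ω Λ₀)) :
    ∃ d : Basis (Fin n) K1 W, ⇑d = fun i => q (b i) := by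
  have hli : LinearIndependent K1 (fun i => q (b i)) := by
    rw [Fintype.linearIndependent_iff]
    intro g hg i
    choose u hu hresu using fun i => hres_surj (g i)
    have hxL : (∑ j, u j • b j) ∈ L := hLb ▸ ⟨u, hu, rfl⟩
    have hqx : q (∑ j, u j • b j) = 0 := by
      rw [q_sum b hLb hq_add hq_smul hu Finset.univ]
      rw [← hg]
      exact Finset.sum_congr rfl fun j _ => by rw [hresu]
    have hker := (hq_ker _ hxL).1 hqx
    rw [hLb, spanBy_Mbig_latSet b, mem_latSet_basis] at hker
    have hrepr : ⇑(b.repr (∑ j, u j • b j)) = u := b.repr_sum_self u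
    rw [hrepr] at hker
    rw [← hresu i]
    exact (hres_ker _ (hu i)).2 (hker i)
  have hspan : ⊤ ≤ Submodule.span K1 (Set.range fun i => q (b i)) := by
    intro w _
    obtain ⟨x, hx, rfl⟩ := hq_surj w
    rw [q_repr b hLb hq_add hq_smul hx]
    exact Submodule.sum_mem _ fun i _ =>
      Submodule.smul_mem _ _ (Submodule.subset_span ⟨i, rfl⟩)
  exact ⟨Basis.mk hli hspan, Basis.coe_mk hli hspan⟩

lemma q_image_latSet (b : Basis (Fin n) K V) (hLb : L = latSet (Obig ω Λ₀) ⇑b)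
    (hq_add : ∀ x ∈ L, ∀ y ∈ L, q (x + y) = q x + q y)
    (hq_smul : ∀ r ∈ Obig ω Λ₀, ∀ x ∈ L, q (r • x) = res r • q x) :
    q '' latSet (OO ω) ⇑b = latSet (res '' OO ω) (fun i => q (b i)) := by
  ext w
  constructor
  · rintro ⟨x, ⟨c, hc, rfl⟩, rfl⟩
    refine ⟨fun i => res (c i), fun i => ⟨c i, hc i, rfl⟩, ?_⟩
    exact q_sum b hLb hq_add hq_smul (fun i => OO_subset_Obig (hc i)) Finset.univ
  · rintro ⟨t, ht, rfl⟩
    choose c hc hct using ht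
    refine ⟨∑ i, c i • b i, ⟨c, hc, rfl⟩, ?_⟩
    rw [q_sum b hLb hq_add hq_smul (fun i => OO_subset_Obig (hc i)) Finset.univ]
    exact Finset.sum_congr rfl fun i _ => by rw [hct]

lemma q_inj_latSet (b1 b2 : Basis (Fin n) K V)
    (h1 : L = latSet (Obig ω Λ₀) ⇑b1) (h2 : L = latSet (Obig ω Λ₀) ⇑b2)
    (hq_add : ∀ x ∈ L, ∀ y ∈ L, q (x + y) = q x + q y)
    (hq_ker : ∀ x ∈ L, (q x = 0 ↔ x ∈ SpanBy (Mbig ω Λ₀) L))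
    (him : q '' latSet (OO ω) ⇑b1 ⊆ q '' latSet (OO ω) ⇑b2) :
    latSet (OO ω) ⇑b1 ⊆ latSet (OO ω) ⇑b2 := by
  intro x hx
  obtain ⟨y, hy, hqy⟩ := him ⟨x, hx, rfl⟩
  have hxL : x ∈ L := h1 ▸ latSet_mono OO_subset_Obig ⇑b1 hx
  have hyL : y ∈ L := h2 ▸ latSet_mono OO_subset_Obig ⇑b2 hy
  have hxyL : x - y ∈ L := by
    rw [h2] at hxL hyL ⊢
    exact sub_mem_latSet (fun a ha b hb => sub_mem_Obig ha hb) hxL hyL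
  have hq0 : q (x - y) = 0 := by
    have h3 : q x = q (x - y) + q y := by
      have := hq_add _ hxyL _ hyL
      rwa [sub_add_cancel] at this
    rw [hqy] at h3
    exact right_eq_add.1 h3
  have hker := (hq_ker _ hxyL).1 hq0
  rw [h2, spanBy_Mbig_latSet b2] at hker
  have hxy2 : x - y ∈ latSet (OO ω) ⇑b2 := latSet_mono Mbig_subset_OO ⇑b2 hker
  have := add_mem_latSet (S := OO ω) (fun a ha b hb => add_mem_OO ha hb) hxy2 hy
  rwa [sub_add_cancel] at this

end Quotient

lemma image_smul_comp (s t : K) (X : Set V) :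
    (fun v => s • v) '' ((fun v => t • v) '' X) = (fun v => (s*t) • v) '' X := by
  rw [← Set.image_comp]
  have he : ((fun v => s • v) ∘ fun v => t • v) = fun v : V => (s*t) • v :=
    funext fun v => (mul_smul s t v).symm
  rw [he]

lemma one_smul_image (X : Set V) : (fun v => (1:K) • v) '' X = X := by
  simp

/-- if `u • L = L` for `L = latSet 𝓞 b` then `u, u⁻¹ ∈ 𝓞`. -/
lemma latSet_smul_eq_self {b : Basis (Fin n) K V} {u : K} (hu : u ≠ 0)
    (h : (fun v => u • v) '' latSet (Obig ω Λ₀) ⇑b = latSet (Obig ω Λ₀) ⇑b) (i0 : Fin n) :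
    u ∈ Obig ω Λ₀ ∧ u⁻¹ ∈ Obig ω Λ₀ := by
  constructor
  · have h1 : u • b i0 ∈ latSet (Obig ω Λ₀) ⇑b := by
      rw [← h]
      exact ⟨b i0, basis_mem_latSet zero_mem_Obig one_mem_Obig b i0, rfl⟩
    have hu1 := (mem_latSet_basis b).1 h1 i0
    rwa [map_smul, Finsupp.smul_apply, Basis.repr_self_apply, if_pos rfl, smul_eq_mul,
      mul_one] at hu1
  · have h2 := basis_mem_latSet (S := Obig ω Λ₀) zero_mem_Obig one_mem_Obig b i0
    rw [← h] at h2
    obtain ⟨x, hx, hux⟩ := h2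
    have hxe : x = u⁻¹ • b i0 := by
      rw [← hux]
      exact (inv_smul_smul₀ hu x).symm
    have := (mem_latSet_basis b).1 hx i0
    rw [hxe] at this
    rwa [map_smul, Finsupp.smul_apply, Basis.repr_self_apply, if_pos rfl, smul_eq_mul,
      mul_one] at this

/-- if `u` is a unit of `𝓞` then `u • latSet 𝓞 b = latSet 𝓞 b`. -/
lemma smul_latSet_Obig_self {u : K} (hu : u ∈ Obig ω Λ₀) (hui : u⁻¹ ∈ Obig ω Λ₀)
    (hu0 : u ≠ 0) (b : Fin n → V) :
    (fun v => u • v) '' latSet (Obig ω Λ₀) b = latSet (Obig ω Λ₀) b := by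
  rw [smul_image_latSet]
  apply Set.Subset.antisymm
  · rintro v ⟨c, hc, rfl⟩
    refine ⟨fun i => c i * u, fun i => mul_mem_Obig (hc i) hu, ?_⟩
    exact Finset.sum_congr rfl fun i _ => by rw [smul_smul]
  · rintro v ⟨c, hc, rfl⟩
    refine ⟨fun i => c i * u⁻¹, fun i => mul_mem_Obig (hc i) hui, ?_⟩
    exact Finset.sum_congr rfl fun i _ => by
      rw [smul_smul, mul_assoc, inv_mul_cancel₀ hu0, mul_one]

section Quotient2
variable {K1 : Type*} [Field K1] {W : Type*} [AddCommGroup W] [Module K1 W]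
variable {res : K → K1} {q : V → W} {L : Set V}

lemma q_image_smul {u : K} (hu : u ∈ Obig ω Λ₀) {S : Set V} (hS : S ⊆ L)
    (hq_smul : ∀ r ∈ Obig ω Λ₀, ∀ x ∈ L, q (r • x) = res r • q x) :
    q '' ((fun v => u • v) '' S) = (fun w => res u • w) '' (q '' S) := by
  rw [← Set.image_comp, ← Set.image_comp]
  exact Set.image_congr fun x hx => hq_smul u hu x (hS hx)

end Quotient2
end St4

open St4 Module in
/-- **Statement 4.** Realizing the residue field `K₁ = 𝓞/𝓜` by a field `K1` with a
surjective "reduction" `res : 𝓞 → K1` of kernel `𝓜`, and the quotient `L/𝓜L` of the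
`𝓞`-lattice `L` by a `K1`-vector space `W` with a reduction map `q` (additive and
`res`-semilinear on `L`, surjective, with kernel `𝓜·L`):  `W` is `n`-dimensional, and
for `L̃` in the fiber `π⁻¹([L])` and `a ∈ K^×` with `a·(𝓞·L̃) = L` one has `𝓜L ⊆ a·L̃`,
the image `q(a·L̃)` is an `𝓞₁`-lattice of `W` (where `𝓞₁ = res(𝕆)`), its homothety
class depends only on `[L̃]`, and `[L̃] ↦ [q(a·L̃)]` is an `SL(L/𝓜L)`-equivariant
bijection from `π⁻¹([L])` onto the set of homothety classes of `𝓞₁`-lattices of `W`. -/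
theorem statement4 {K Λ V : Type*} [Field K] [AddCommGroup Λ] [LinearOrder Λ] [IsOrderedAddMonoid Λ]
    [AddCommGroup V] [Module K V]
    (ω : AddValuation K (WithTop Λ))
    (hsurj : ∀ l : Λ, ∃ x : K, ω x = (l : WithTop Λ))
    (Λ₀ : AddSubgroup Λ)
    (hconv : ∀ a ∈ Λ₀, ∀ b : Λ, 0 ≤ b → b ≤ a → b ∈ Λ₀)
    (hbot : Λ₀ ≠ ⊥) (htop : Λ₀ ≠ ⊤)
    (n : ℕ) (hn : 1 ≤ n) (hdim : Module.finrank K V = n)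
    -- a realization of the residue field K₁ = 𝓞/𝓜
    (K1 : Type*) [Field K1] (res : K → K1)
    (hres_add : ∀ x ∈ Obig ω Λ₀, ∀ y ∈ Obig ω Λ₀, res (x + y) = res x + res y)
    (hres_mul : ∀ x ∈ Obig ω Λ₀, ∀ y ∈ Obig ω Λ₀, res (x * y) = res x * res y)
    (hres_one : res 1 = 1)
    (hres_surj : ∀ t : K1, ∃ x ∈ Obig ω Λ₀, res x = t)
    (hres_ker : ∀ x ∈ Obig ω Λ₀, (res x = 0 ↔ x ∈ Mbig ω Λ₀))
    -- the 𝓞-lattice L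
    (L : Set V) (hL : IsLat n (Obig ω Λ₀) L)
    -- a realization of the quotient W = L/𝓜L
    (W : Type*) [AddCommGroup W] [Module K1 W] (q : V → W)
    (hq_add : ∀ x ∈ L, ∀ y ∈ L, q (x + y) = q x + q y)
    (hq_smul : ∀ r ∈ Obig ω Λ₀, ∀ x ∈ L, q (r • x) = res r • q x)
    (hq_surj : ∀ w : W, ∃ x ∈ L, q x = w)
    (hq_ker : ∀ x ∈ L, (q x = 0 ↔ x ∈ SpanBy (Mbig ω Λ₀) L)) :
    -- L/𝓜L is an n-dimensional K₁-vector space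
    Nonempty (Module.Basis (Fin n) K1 W) ∧
    -- 𝓜L ⊆ a·L̃
    (∀ (Lt : Set V) (a : K), IsLat n (OO ω) Lt → a ≠ 0 →
      (fun v => a • v) '' SpanBy (Obig ω Λ₀) Lt = L →
      SpanBy (Mbig ω Λ₀) L ⊆ (fun v => a • v) '' Lt) ∧
    -- q(a·L̃) is an 𝓞₁-lattice of W
    (∀ (Lt : Set V) (a : K), IsLat n (OO ω) Lt → a ≠ 0 →
      (fun v => a • v) '' SpanBy (Obig ω Λ₀) Lt = L →
      IsLat n (res '' OO ω) (q '' ((fun v => a • v) '' Lt))) ∧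
    -- Res_L is well defined on homothety classes and injective
    (∀ (Lt Lt' : Set V) (a a' : K), IsLat n (OO ω) Lt → IsLat n (OO ω) Lt' →
      a ≠ 0 → a' ≠ 0 →
      (fun v => a • v) '' SpanBy (Obig ω Λ₀) Lt = L →
      (fun v => a' • v) '' SpanBy (Obig ω Λ₀) Lt' = L →
      (Homo (K := K) Lt Lt' ↔
        Homo (K := K1) (q '' ((fun v => a • v) '' Lt)) (q '' ((fun v => a' • v) '' Lt')))) ∧
    -- Res_L is surjective onto the 𝓞₁-lattices of W (up to homothety)
    (∀ P : Set W, IsLat n (res '' OO ω) P →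
      ∃ (Lt : Set V) (a : K), IsLat n (OO ω) Lt ∧ a ≠ 0 ∧
        (fun v => a • v) '' SpanBy (Obig ω Λ₀) Lt = L ∧
        Homo (K := K1) (q '' ((fun v => a • v) '' Lt)) P) ∧
    -- Res_L is SL(L/𝓜L)-equivariant: Res_L([g(L̃)]) = ḡ · Res_L([L̃])
    (∀ g : V ≃ₗ[K] V, LinearMap.det g.toLinearMap = 1 → (fun v => g v) '' L = L →
      ∀ gbar : W ≃ₗ[K1] W, (∀ x ∈ L, q (g x) = gbar (q x)) →
      ∀ (Lt : Set V) (a a' : K), IsLat n (OO ω) Lt → a ≠ 0 → a' ≠ 0 →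
        (fun v => a • v) '' SpanBy (Obig ω Λ₀) Lt = L →
        (fun v => a' • v) '' SpanBy (Obig ω Λ₀) ((fun v => g v) '' Lt) = L →
        Homo (K := K1) (q '' ((fun v => a' • v) '' ((fun v => g v) '' Lt)))
          ((fun z => gbar z) '' (q '' ((fun v => a • v) '' Lt)))) := by
  classical
  obtain ⟨b₀, hLb₀'⟩ := hL
  have hLb₀ : L = latSet (Obig ω Λ₀) ⇑b₀ := hLb₀'
  clear hLb₀'
  have i0 : Fin n := ⟨0, hn⟩
  -- setup: normal form for the fiber data
  have setup : ∀ (Lt : Set V) (a : K), IsLat n (OO ω) Lt → a ≠ 0 →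
      (fun v => a • v) '' SpanBy (Obig ω Λ₀) Lt = L →
      ∃ b' : Basis (Fin n) K V, ((fun v => a • v) '' Lt = latSet (OO ω) ⇑b') ∧
        L = latSet (Obig ω Λ₀) ⇑b' := by
    intro Lt a hLt ha hsp
    obtain ⟨b, hb'⟩ := hLt
    have hb : Lt = latSet (OO ω) ⇑b := hb'
    refine ⟨b.map (LinearEquiv.smulOfNeZero K V a ha), ?_, ?_⟩
    · rw [hb, smul_image_latSet]
      congr 1
    · rw [← hsp, hb, spanBy_Obig_latSet OO_subset_Obig zero_mem_OO one_mem_OO b,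
        smul_image_latSet]
      congr 1
  refine ⟨?_, ?_, ?_, ?_, ?_, ?_⟩
  · -- Part 1
    obtain ⟨d, _⟩ := exists_qbasis b₀ hLb₀ hq_add hq_smul hq_surj hq_ker hres_surj hres_ker
    exact ⟨d⟩
  · -- Part 2
    intro Lt a hLt ha hsp
    obtain ⟨b', him, hLb'⟩ := setup Lt a hLt ha hsp
    rw [hLb₀] at hq_add hq_ker
    rw [him, hLb', spanBy_Mbig_latSet b']
    exact latSet_mono Mbig_subset_OO ⇑b'
  · -- Part 3
    intro Lt a hLt ha hsp
    obtain ⟨b', him, hLb'⟩ := setup Lt a hLt ha hsp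
    obtain ⟨d, hd⟩ := exists_qbasis b' hLb' hq_add hq_smul hq_surj hq_ker hres_surj hres_ker
    refine ⟨d, ?_⟩
    rw [him, q_image_latSet b' hLb' hq_add hq_smul, hd]
    rfl
  · -- Part 4
    intro Lt Lt' a a' hLt hLt' ha ha' hsp hsp'
    obtain ⟨b1, him1, hL1⟩ := setup Lt a hLt ha hsp
    obtain ⟨b2, him2, hL2⟩ := setup Lt' a' hLt' ha' hsp'
    have hsub1 : (fun v => a • v) '' Lt ⊆ L := by
      rw [him1, hL1]; exact latSet_mono OO_subset_Obig ⇑b1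
    constructor
    · rintro ⟨t, ht, hEq⟩
      have hu0 : a' * t * a⁻¹ ≠ 0 := mul_ne_zero (mul_ne_zero ha' ht) (inv_ne_zero ha)
      have hua : a' * t * a⁻¹ * a = a' * t := by field_simp
      have himg : (fun v => a' • v) '' Lt'
          = (fun v => (a' * t * a⁻¹) • v) '' ((fun v => a • v) '' Lt) := by
        rw [hEq, image_smul_comp, image_smul_comp, hua]
      have hUL : (fun v => (a' * t * a⁻¹) • v) '' L = L := by
        conv_lhs => rw [← hsp, image_smul_comp, hua]
        rw [← hsp']
        rw [hEq, spanBy_smul_image, image_smul_comp]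
      obtain ⟨huO, huiO⟩ := latSet_smul_eq_self hu0 (by rw [← hLb₀]; exact hUL) i0
      have hunotM := not_mem_Mbig_of_inv hu0 huO huiO
      have hresu : res (a' * t * a⁻¹) ≠ 0 := fun h => hunotM ((hres_ker _ huO).1 h)
      refine ⟨res (a' * t * a⁻¹), hresu, ?_⟩
      rw [himg]
      exact q_image_smul huO hsub1 hq_smul
    · rintro ⟨t, ht, hEq⟩
      obtain ⟨u, huO, hresu⟩ := hres_surj t
      have hunotM : u ∉ Mbig ω Λ₀ := fun hM => ht (hresu ▸ (hres_ker u huO).2 hM)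
      obtain ⟨hu0, huiO, _⟩ := inv_mem_of_not_mem_Mbig huO hunotM
      set b1u := b1.map (LinearEquiv.smulOfNeZero K V u hu0) with hb1u_def
      have hb1u : ⇑b1u = fun i => u • b1 i := by
        funext i; rw [hb1u_def, Basis.map_apply, LinearEquiv.smulOfNeZero_apply]
      have him1u : (fun v => u • v) '' ((fun v => a • v) '' Lt) = latSet (OO ω) ⇑b1u := by
        rw [him1, smul_image_latSet, hb1u]
      have hL1u : L = latSet (Obig ω Λ₀) ⇑b1u := by
        rw [hb1u]
        have h5 := smul_latSet_Obig_self huO huiO hu0 ⇑b1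
        rw [smul_image_latSet] at h5
        rw [h5]; exact hL1
      have hq_eq : q '' latSet (OO ω) ⇑b1u = q '' latSet (OO ω) ⇑b2 := by
        rw [← him1u, ← him2, q_image_smul huO hsub1 hq_smul, hresu, ← hEq]
      have hset_eq : latSet (OO ω) ⇑b1u = latSet (OO ω) ⇑b2 :=
        Set.Subset.antisymm
          (q_inj_latSet b1u b2 hL1u hL2 hq_add hq_ker (le_of_eq hq_eq))
          (q_inj_latSet b2 b1u hL2 hL1u hq_add hq_ker (le_of_eq hq_eq.symm))
      have hba : (fun v => (u * a) • v) '' Lt = (fun v => a' • v) '' Lt' := by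
        rw [← image_smul_comp u a Lt, him1u, hset_eq, him2]
      refine ⟨a'⁻¹ * (u * a), mul_ne_zero (inv_ne_zero ha') (mul_ne_zero hu0 ha), ?_⟩
      rw [← image_smul_comp a'⁻¹ (u * a) Lt, hba, image_smul_comp,
        inv_mul_cancel₀ ha', one_smul_image]
  · -- Part 5
    intro P hP
    obtain ⟨d, hPd'⟩ := hP
    have hPd : P = latSet (res '' OO ω) ⇑d := hPd'
    clear hPd'
    obtain ⟨d₀, hd₀⟩ := exists_qbasis b₀ hLb₀ hq_add hq_smul hq_surj hq_ker hres_surj hres_ker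
    choose y hyL hqy using fun j => hq_surj (d j)
    set A : Matrix (Fin n) (Fin n) K := Matrix.of fun j i => b₀.repr (y j) i with hA_def
    have hAO : ∀ j i, A j i ∈ Obig ω Λ₀ := fun j i =>
      (mem_latSet_basis b₀).1 (hLb₀ ▸ hyL j) i
    have hy_eq : ∀ j, y j = ∑ i, A j i • b₀ i := fun j => (b₀.sum_repr (y j)).symm
    have hd_eq : ∀ j, d j = ∑ i, res (A j i) • d₀ i := fun j => by
      rw [← hqy j, q_repr b₀ hLb₀ hq_add hq_smul (hyL j)]
      refine Finset.sum_congr rfl fun i _ => ?_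
      rw [congrFun hd₀ i, hA_def]
      rfl
    set R : Matrix (Fin n) (Fin n) K1 := Matrix.of fun i j => res (A j i) with hR_def
    have hR : R = d₀.toMatrix ⇑d := by
      ext i j
      rw [Basis.toMatrix_apply, hd_eq j, d₀.repr_sum_self]
      rfl
    have hRdet : R.det ≠ 0 := by
      have h1 := Basis.toMatrix_mul_toMatrix_flip d₀ d
      have h2 := congrArg Matrix.det h1
      rw [Matrix.det_mul, Matrix.det_one] at h2
      rw [hR]
      exact left_ne_zero_of_mul_eq_one h2
    -- the subring 𝓞 and the residue homomorphism
    set OR : Subring K :=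
      { carrier := Obig ω Λ₀
        mul_mem' := fun ha hb => mul_mem_Obig ha hb
        one_mem' := one_mem_Obig
        add_mem' := fun ha hb => add_mem_Obig ha hb
        zero_mem' := zero_mem_Obig
        neg_mem' := fun ha => neg_mem_Obig ha } with hOR_def
    set resHom : OR →+* K1 :=
      { toFun := fun x => res x.1
        map_one' := hres_one
        map_mul' := fun x y => hres_mul _ x.2 _ y.2
        map_zero' := (hres_ker 0 zero_mem_Obig).2 zero_mem_Mbig
        map_add' := fun x y => hres_add _ x.2 _ y.2 } with hresHom_def
    set A' : Matrix (Fin n) (Fin n) OR := Matrix.of fun j i => ⟨A j i, hAO j i⟩ with hA'_def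
    have hA'map : OR.subtype.mapMatrix A' = A := by
      ext j i; rfl
    have hdet_val : (A'.det : K) = A.det := by
      have := RingHom.map_det OR.subtype A'
      rw [hA'map] at this
      exact this
    have hdet_mem : A.det ∈ Obig ω Λ₀ := hdet_val ▸ A'.det.2
    have hresdet : res A.det = (resHom.mapMatrix A').det := by
      rw [← RingHom.map_det resHom A']
      show res A.det = res (A'.det : K)
      rw [hdet_val]
    have hmapR : resHom.mapMatrix A' = R.transpose := by
      ext j i; rfl
    have hdet_notM : A.det ∉ Mbig ω Λ₀ := by
      intro hM
      have h0 : res A.det = 0 := (hres_ker _ hdet_mem).2 hM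
      rw [hresdet, hmapR, Matrix.det_transpose] at h0
      exact hRdet h0
    obtain ⟨hdet0, hdetiO, _⟩ := inv_mem_of_not_mem_Mbig hdet_mem hdet_notM
    set E : Matrix (Fin n) (Fin n) K := A.det⁻¹ • A.adjugate with hE_def
    have hEA : E * A = 1 := by
      rw [hE_def, Matrix.smul_mul, Matrix.adjugate_mul, smul_smul,
        inv_mul_cancel₀ hdet0, one_smul]
    have hadjO : ∀ k j, A.adjugate k j ∈ Obig ω Λ₀ := by
      intro k j
      have := RingHom.map_adjugate OR.subtype A'
      rw [hA'map] at this
      have h2 : A.adjugate k j = (A'.adjugate k j : K) := by rw [← this]; rfl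
      rw [h2]
      exact (A'.adjugate k j).2
    have hEO : ∀ k j, E k j ∈ Obig ω Λ₀ := fun k j => by
      rw [hE_def, Matrix.smul_apply, smul_eq_mul]
      exact mul_mem_Obig hdetiO (hadjO k j)
    have hb₀y : ∀ k, b₀ k = ∑ j, E k j • y j := by
      intro k
      have h1 : ∑ j, E k j • y j = ∑ i, (∑ j, E k j * A j i) • b₀ i := by
        rw [← sum_smul_sum (fun j => E k j) (fun j i => A j i) ⇑b₀]
        exact Finset.sum_congr rfl fun j _ => by rw [← hy_eq j]
      rw [h1]
      have h2 : ∀ i, ∑ j, E k j * A j i = (1 : Matrix (Fin n) (Fin n) K) k i := fun i => by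
        rw [← hEA, Matrix.mul_apply]
      rw [Finset.sum_congr rfl fun i _ => by rw [h2 i]]
      simp [Matrix.one_apply, ite_smul]
    have hspany : ∀ k, b₀ k ∈ Submodule.span K (Set.range y) := fun k => by
      rw [hb₀y k]
      exact Submodule.sum_mem _ fun j _ =>
        Submodule.smul_mem _ _ (Submodule.subset_span ⟨j, rfl⟩)
    have hspan : ⊤ ≤ Submodule.span K (Set.range y) := by
      rw [← b₀.span_eq]
      rw [Submodule.span_le]
      rintro v ⟨k, rfl⟩
      exact hspany k
    set ybas := basisOfTopLeSpanOfCardEqFinrank y hspan (by simp [hdim]) with hybas_def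
    have hybas : ⇑ybas = y := coe_basisOfTopLeSpanOfCardEqFinrank y hspan _
    have hLy : L = latSet (Obig ω Λ₀) y := by
      rw [hLb₀]
      ext v
      constructor
      · rintro ⟨c, hc, rfl⟩
        refine ⟨fun j => ∑ i, c i * E i j, fun j =>
          sum_mem_Obig (fun i _ => mul_mem_Obig (hc i) (hEO i j)), ?_⟩
        rw [← sum_smul_sum (fun i => c i) (fun i j => E i j) y]
        exact Finset.sum_congr rfl fun i _ => by rw [← hb₀y i]
      · rintro ⟨c, hc, rfl⟩
        refine ⟨fun i => ∑ j, c j * A j i, fun i =>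
          sum_mem_Obig (fun j _ => mul_mem_Obig (hc j) (hAO j i)), ?_⟩
        rw [← sum_smul_sum (fun j => c j) (fun j i => A j i) ⇑b₀]
        exact Finset.sum_congr rfl fun j _ => by rw [← hy_eq j]
    have hLy' : L = latSet (Obig ω Λ₀) ⇑ybas := by rw [hybas]; exact hLy
    have hq_img : q '' latSet (OO ω) y = P := by
      have h3 := q_image_latSet ybas hLy' hq_add hq_smul
      rw [hybas] at h3
      rw [h3, hPd]
      have h4 : (fun i => q (y i)) = ⇑d := funext hqy
      rw [h4]
    refine ⟨latSet (OO ω) y, 1, ⟨ybas, by rw [hybas]; rfl⟩, one_ne_zero, ?_, ?_⟩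
    · rw [one_smul_image]
      rw [show latSet (OO ω) y = latSet (OO ω) ⇑ybas by rw [hybas]]
      rw [spanBy_Obig_latSet OO_subset_Obig zero_mem_OO one_mem_OO ybas]
      exact hLy'.symm
    · refine ⟨1, one_ne_zero, ?_⟩
      rw [one_smul_image, one_smul_image, hq_img]
  · -- Part 6
    intro g hdet hgL gbar hcomp Lt a a' hLt ha ha' hsp hsp'
    obtain ⟨b1, him1, hL1⟩ := setup Lt a hLt ha hsp
    have hsub1 : (fun v => a • v) '' Lt ⊆ L := by
      rw [him1, hL1]; exact latSet_mono OO_subset_Obig ⇑b1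
    have h1 : SpanBy (Obig ω Λ₀) ((fun v => g v) '' Lt)
        = (fun v => g v) '' SpanBy (Obig ω Λ₀) Lt := spanBy_equiv_image _ g Lt
    have hgsmul : ∀ (s : K) (X : Set V),
        (fun v => g v) '' ((fun v => s • v) '' X)
          = (fun v => s • v) '' ((fun v => g v) '' X) := by
      intro s X
      rw [← Set.image_comp, ← Set.image_comp]
      exact Set.image_congr' (fun x => map_smul g s x)
    have h2 : (fun v => g v) '' ((fun v => a' • v) '' SpanBy (Obig ω Λ₀) Lt) = L := by
      rw [hgsmul, ← h1]; exact hsp'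
    have h4 : (fun v => a' • v) '' SpanBy (Obig ω Λ₀) Lt = L := by
      apply Set.image_injective.2 g.injective
      rw [h2, hgL]
    have hu0 : a' * a⁻¹ ≠ 0 := mul_ne_zero ha' (inv_ne_zero ha)
    have hua : a' * a⁻¹ * a = a' := by field_simp
    have hUL : (fun v => (a' * a⁻¹) • v) '' L = L := by
      conv_lhs => rw [← hsp, image_smul_comp, hua]
      exact h4
    obtain ⟨huO, huiO⟩ := latSet_smul_eq_self hu0 (by rw [← hLb₀]; exact hUL) i0
    have hunotM := not_mem_Mbig_of_inv hu0 huO huiO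
    have hresu : res (a' * a⁻¹) ≠ 0 := fun h => hunotM ((hres_ker _ huO).1 h)
    -- the key identity
    have hkey : q '' ((fun v => a' • v) '' ((fun v => g v) '' Lt))
        = (fun w => res (a' * a⁻¹) • w) '' ((fun z => gbar z) '' (q '' ((fun v => a • v) '' Lt))) := by
      have e1 : (fun v => a' • v) '' ((fun v => g v) '' Lt)
          = (fun v => (a' * a⁻¹) • v) '' ((fun v => g v) '' ((fun v => a • v) '' Lt)) := by
        rw [hgsmul, image_smul_comp, hua]
      have e2 : q '' ((fun v => g v) '' ((fun v => a • v) '' Lt))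
          = (fun z => gbar z) '' (q '' ((fun v => a • v) '' Lt)) :=
        calc q '' ((fun v => g v) '' ((fun v => a • v) '' Lt))
            = (fun x => q (g x)) '' ((fun v => a • v) '' Lt) :=
              Set.image_image q (fun v => g v) _
          _ = (fun x => gbar (q x)) '' ((fun v => a • v) '' Lt) :=
              Set.image_congr fun x hx => hcomp x (hsub1 hx)
          _ = (fun z => gbar z) '' (q '' ((fun v => a • v) '' Lt)) :=
              (Set.image_image (fun z => gbar z) q _).symm
      have hgsub : (fun v => g v) '' ((fun v => a • v) '' Lt) ⊆ L := by
        rw [← hgL]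
        exact Set.image_mono hsub1
      rw [e1, q_image_smul huO hgsub hq_smul, e2]
    refine ⟨(res (a' * a⁻¹))⁻¹, inv_ne_zero hresu, ?_⟩
    rw [hkey, image_smul_comp, inv_mul_cancel₀ hresu, one_smul_image]
end

section
/- Assume R is divisible. Then for every x ∈ V_R and every pair of bases Δ, Δ' of Φ, there exists a unique w ∈ W(Φ) such that x ∈ C̄^v_{R,w(Δ)} and C^v_{R,w(Δ)} ∩ (x + C^v_{R,Δ'}) ≠ ∅. -/
open scoped Classical TensorProduct

section RootSetup

variable {VZ : Type*} [AddCommGroup VZ]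

/-- the additive map `α ⊗ id_R : V_R = V_ℤ ⊗ R → R` induced by a root `α`. -/
noncomputable def rootR (R : Type*) [AddCommGroup R] [LinearOrder R] [IsOrderedAddMonoid R] (α : VZ →ₗ[ℤ] ℤ) :
    VZ ⊗[ℤ] R →ₗ[ℤ] R :=
  (TensorProduct.lid ℤ R).toLinearMap.comp (LinearMap.rTensor R α)

/-- `Δ` is a basis of the root system `Φ` (in the sense of Bourbaki): `Δ ⊆ Φ` is linearly
independent and every root is a linear combination of `Δ` with coefficients that are all
non-negative integers or all non-positive integers. -/
def IsBase (Φ Δ : Finset (VZ →ₗ[ℤ] ℤ)) : Prop :=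
  Δ ⊆ Φ ∧ LinearIndependent ℤ (fun a : {x // x ∈ Δ} => (a : VZ →ₗ[ℤ] ℤ)) ∧
    ∀ β ∈ Φ, (∃ c : (VZ →ₗ[ℤ] ℤ) → ℕ, β = ∑ a ∈ Δ, (c a : ℤ) • a) ∨
      ∃ c : (VZ →ₗ[ℤ] ℤ) → ℕ, β = -∑ a ∈ Δ, (c a : ℤ) • a

/-- `Φ⁺_Δ`, the positive roots with respect to the basis `Δ`. -/
noncomputable def PosRoots (Φ Δ : Finset (VZ →ₗ[ℤ] ℤ)) : Finset (VZ →ₗ[ℤ] ℤ) :=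
  Φ.filter fun β => ∃ c : (VZ →ₗ[ℤ] ℤ) → ℕ, β = ∑ a ∈ Δ, (c a : ℤ) • a

/-- the open vector chamber `C^v_{R,Δ}`. -/
def chamberR (R : Type*) [AddCommGroup R] [LinearOrder R] [IsOrderedAddMonoid R] (Δ : Finset (VZ →ₗ[ℤ] ℤ)) :
    Set (VZ ⊗[ℤ] R) :=
  {x | ∀ α ∈ Δ, 0 < rootR R α x}

/-- the closed vector chamber `C̄^v_{R,Δ}`. -/
def closedChamberR (R : Type*) [AddCommGroup R] [LinearOrder R] [IsOrderedAddMonoid R] (Δ : Finset (VZ →ₗ[ℤ] ℤ)) :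
    Set (VZ ⊗[ℤ] R) :=
  {x | ∀ α ∈ Δ, 0 ≤ rootR R α x}

/-- the vector face `F^v_R(Δ, Δ_P)`. -/
def faceR (R : Type*) [AddCommGroup R] [LinearOrder R] [IsOrderedAddMonoid R] (Δ ΔP : Finset (VZ →ₗ[ℤ] ℤ)) :
    Set (VZ ⊗[ℤ] R) :=
  {x | (∀ α ∈ ΔP, rootR R α x = 0) ∧ ∀ α ∈ Δ, α ∉ ΔP → 0 < rootR R α x}

/-- the Weyl group `W(Φ)`, generated by the reflections `r_α : x ↦ x − α(x)·α^∨`. -/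
def Weyl (Φ : Finset (VZ →ₗ[ℤ] ℤ)) (coroot : (VZ →ₗ[ℤ] ℤ) → VZ) : Subgroup (VZ ≃ₗ[ℤ] VZ) :=
  Subgroup.closure {e : VZ ≃ₗ[ℤ] VZ | ∃ α ∈ Φ, ∀ x : VZ, e x = x - α x • coroot α}

/-- the action of `w ∈ W(Φ)` on roots: `w(α) = α ∘ w⁻¹`. -/
def dAct (w : VZ ≃ₗ[ℤ] VZ) (α : VZ →ₗ[ℤ] ℤ) : VZ →ₗ[ℤ] ℤ :=
  α.comp w.symm.toLinearMap

/-- the action of `w ∈ W(Φ)` on `V_R = V_ℤ ⊗ R`. -/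
noncomputable def tAct (R : Type*) [AddCommGroup R] [LinearOrder R] [IsOrderedAddMonoid R] (w : VZ ≃ₗ[ℤ] VZ) :
    VZ ⊗[ℤ] R ≃ₗ[ℤ] VZ ⊗[ℤ] R :=
  TensorProduct.congr w (LinearEquiv.refl ℤ R)

end RootSetup


structure RS (VZ : Type*) [AddCommGroup VZ] where
  Φ : Finset (VZ →ₗ[ℤ] ℤ)
  co : (VZ →ₗ[ℤ] ℤ) → VZ
  h0 : (0 : VZ →ₗ[ℤ] ℤ) ∉ Φ
  h2 : ∀ α ∈ Φ, α (co α) = 2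
  hrefl : ∀ α ∈ Φ, ∀ β ∈ Φ, β - β (co α) • α ∈ Φ
  hcorefl : ∀ α ∈ Φ, ∀ β ∈ Φ, co (β - β (co α) • α) = co β - α (co β) • co α

namespace RS

variable {VZ : Type*} [AddCommGroup VZ] (S : RS VZ)

/-- underlying linear map of the reflection -/
def reflMap (α : VZ →ₗ[ℤ] ℤ) : VZ →ₗ[ℤ] VZ :=
  LinearMap.id - (LinearMap.toSpanSingleton ℤ VZ (S.co α)).comp α

@[simp] lemma reflMap_apply (α : VZ →ₗ[ℤ] ℤ) (x : VZ) :
    S.reflMap α x = x - α x • S.co α := rfl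

lemma reflMap_involutive {α : VZ →ₗ[ℤ] ℤ} (hα : α (S.co α) = 2) :
    Function.Involutive (S.reflMap α) := by
  intro x
  simp only [reflMap_apply, map_sub, map_smul, hα, smul_eq_mul]
  module

/-- the reflection as a linear equivalence (junk value if not involutive) -/
noncomputable def r (α : VZ →ₗ[ℤ] ℤ) : VZ ≃ₗ[ℤ] VZ :=
  if h : Function.Involutive (S.reflMap α) then LinearEquiv.ofInvolutive (S.reflMap α) h
  else LinearEquiv.refl ℤ VZ

lemma r_apply' {α : VZ →ₗ[ℤ] ℤ} (hα : α (S.co α) = 2) (x : VZ) :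
    S.r α x = x - α x • S.co α := by
  rw [r, dif_pos (S.reflMap_involutive hα)]
  rfl

lemma r_apply {α : VZ →ₗ[ℤ] ℤ} (hα : α ∈ S.Φ) (x : VZ) :
    S.r α x = x - α x • S.co α := S.r_apply' (S.h2 α hα) x

lemma r_symm_apply' {α : VZ →ₗ[ℤ] ℤ} (hα : α (S.co α) = 2) (x : VZ) :
    (S.r α).symm x = x - α x • S.co α := by
  rw [r, dif_pos (S.reflMap_involutive hα)]
  rfl

lemma r_symm_apply {α : VZ →ₗ[ℤ] ℤ} (hα : α ∈ S.Φ) (x : VZ) :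
    (S.r α).symm x = x - α x • S.co α := S.r_symm_apply' (S.h2 α hα) x

lemma r_mul_r {α : VZ →ₗ[ℤ] ℤ} (hα : α ∈ S.Φ) : S.r α * S.r α = 1 := by
  ext x
  have : (S.r α * S.r α) x = S.r α (S.r α x) := rfl
  rw [this, r_apply S hα, r_apply S hα]
  simp only [map_sub, map_smul, S.h2 α hα, smul_eq_mul]
  show _ = x
  module

lemma r_inv {α : VZ →ₗ[ℤ] ℤ} (hα : α ∈ S.Φ) : (S.r α)⁻¹ = S.r α :=
  inv_eq_of_mul_eq_one_right (S.r_mul_r hα)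

end RS
section DAct
variable {VZ : Type*} [AddCommGroup VZ]

lemma dAct_apply (w : VZ ≃ₗ[ℤ] VZ) (β : VZ →ₗ[ℤ] ℤ) (x : VZ) :
    dAct w β x = β (w.symm x) := rfl

@[simp] lemma dAct_one (β : VZ →ₗ[ℤ] ℤ) : dAct (1 : VZ ≃ₗ[ℤ] VZ) β = β := by
  ext x; rfl

lemma LE_mul_apply (u v : VZ ≃ₗ[ℤ] VZ) (x : VZ) : (u * v) x = u (v x) := rfl

lemma LE_inv_apply (u : VZ ≃ₗ[ℤ] VZ) (x : VZ) : u⁻¹ x = u.symm x := rfl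

lemma dAct_mul (u v : VZ ≃ₗ[ℤ] VZ) (β : VZ →ₗ[ℤ] ℤ) :
    dAct (u * v) β = dAct u (dAct v β) := by
  ext x; rfl

lemma dAct_add (w : VZ ≃ₗ[ℤ] VZ) (β γ : VZ →ₗ[ℤ] ℤ) :
    dAct w (β + γ) = dAct w β + dAct w γ := by ext x; rfl

lemma dAct_neg (w : VZ ≃ₗ[ℤ] VZ) (β : VZ →ₗ[ℤ] ℤ) :
    dAct w (-β) = -(dAct w β) := by ext x; rfl

lemma dAct_zsmul (w : VZ ≃ₗ[ℤ] VZ) (n : ℤ) (β : VZ →ₗ[ℤ] ℤ) :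
    dAct w (n • β) = n • dAct w β := by ext x; rfl

lemma dAct_sub (w : VZ ≃ₗ[ℤ] VZ) (β γ : VZ →ₗ[ℤ] ℤ) :
    dAct w (β - γ) = dAct w β - dAct w γ := by ext x; rfl

lemma dAct_sum (w : VZ ≃ₗ[ℤ] VZ) {ι : Type*} (s : Finset ι) (f : ι → (VZ →ₗ[ℤ] ℤ)) :
    dAct w (∑ i ∈ s, f i) = ∑ i ∈ s, dAct w (f i) := by
  ext x
  simp [dAct_apply, LinearMap.sum_apply]

lemma dAct_inv_dAct (w : VZ ≃ₗ[ℤ] VZ) (β : VZ →ₗ[ℤ] ℤ) :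
    dAct w⁻¹ (dAct w β) = β := by
  rw [← dAct_mul, inv_mul_cancel, dAct_one]

lemma dAct_dAct_inv (w : VZ ≃ₗ[ℤ] VZ) (β : VZ →ₗ[ℤ] ℤ) :
    dAct w (dAct w⁻¹ β) = β := by
  rw [← dAct_mul, mul_inv_cancel, dAct_one]

lemma dAct_injective (w : VZ ≃ₗ[ℤ] VZ) : Function.Injective (dAct w) := by
  intro β γ h
  have := congrArg (dAct w⁻¹) h
  rwa [dAct_inv_dAct, dAct_inv_dAct] at this

end DAct

namespace RS
variable {VZ : Type*} [AddCommGroup VZ] (S : RS VZ)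

/-- the Weyl group of S -/
noncomputable def W : Subgroup (VZ ≃ₗ[ℤ] VZ) := Weyl S.Φ S.co

lemma r_mem_W {α : VZ →ₗ[ℤ] ℤ} (hα : α ∈ S.Φ) : S.r α ∈ S.W := by
  apply Subgroup.subset_closure
  exact ⟨α, hα, fun x => S.r_apply hα x⟩

lemma dAct_r {α β : VZ →ₗ[ℤ] ℤ} (hα : α ∈ S.Φ) :
    dAct (S.r α) β = β - β (S.co α) • α := by
  ext x
  rw [dAct_apply, r_symm_apply S hα]
  simp only [map_sub, map_smul, smul_eq_mul, LinearMap.sub_apply, LinearMap.smul_apply]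
  ring

lemma W_stable : ∀ w ∈ S.W, ∀ β ∈ S.Φ, dAct w β ∈ S.Φ ∧ S.co (dAct w β) = w (S.co β) := by
  intro w hw
  refine Subgroup.closure_induction (k := {e : VZ ≃ₗ[ℤ] VZ | ∃ α ∈ S.Φ, ∀ x : VZ, e x = x - α x • S.co α})
    ?_ ?_ ?_ ?_ hw
  · rintro e ⟨α, hα, he⟩ β hβ
    have hesymm : ∀ x, e.symm x = x - α x • S.co α := by
      intro x
      rw [LinearEquiv.symm_apply_eq, he]
      simp only [map_sub, map_smul, S.h2 α hα, smul_eq_mul]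
      module
    have hde : dAct e β = β - β (S.co α) • α := by
      ext x
      rw [dAct_apply, hesymm]
      simp only [map_sub, map_smul, smul_eq_mul, LinearMap.sub_apply, LinearMap.smul_apply]
      ring
    constructor
    · rw [hde]; exact S.hrefl α hα β hβ
    · rw [hde, S.hcorefl α hα β hβ, he]
  · intro β hβ
    simp [hβ]
  · intro u v hu hv ihu ihv β hβ
    rw [dAct_mul]
    obtain ⟨h1, h2⟩ := ihv β hβ
    obtain ⟨h3, h4⟩ := ihu _ h1
    exact ⟨h3, by rw [h4, h2]; rfl⟩
  · intro u hu ihu β hβ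
    -- surjectivity of dAct u on Φ
    have hinj : Set.InjOn (dAct u) S.Φ := fun a _ b _ h => dAct_injective u h
    have himg : S.Φ.image (dAct u) = S.Φ := by
      apply Finset.eq_of_subset_of_card_le
      · intro γ hγ
        obtain ⟨δ, hδ, rfl⟩ := Finset.mem_image.mp hγ
        exact (ihu δ hδ).1
      · rw [Finset.card_image_of_injOn hinj]
    obtain ⟨γ, hγ, hγβ⟩ := Finset.mem_image.mp (himg ▸ hβ)
    have h1 : dAct u⁻¹ β = γ := by rw [← hγβ, dAct_inv_dAct]
    refine ⟨h1 ▸ hγ, ?_⟩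
    rw [h1, ← hγβ, (ihu γ hγ).2]
    show S.co γ = u.symm (u (S.co γ))
    rw [LinearEquiv.symm_apply_apply]

lemma dAct_mem_Φ {w : VZ ≃ₗ[ℤ] VZ} (hw : w ∈ S.W) {β : VZ →ₗ[ℤ] ℤ} (hβ : β ∈ S.Φ) :
    dAct w β ∈ S.Φ := (S.W_stable w hw β hβ).1

lemma co_dAct {w : VZ ≃ₗ[ℤ] VZ} (hw : w ∈ S.W) {β : VZ →ₗ[ℤ] ℤ} (hβ : β ∈ S.Φ) :
    S.co (dAct w β) = w (S.co β) := (S.W_stable w hw β hβ).2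

lemma r_conj {w : VZ ≃ₗ[ℤ] VZ} (hw : w ∈ S.W) {γ : VZ →ₗ[ℤ] ℤ} (hγ : γ ∈ S.Φ) :
    S.r (dAct w γ) = w * S.r γ * w⁻¹ := by
  ext x
  have h1 : (w * S.r γ * w⁻¹) x = w (S.r γ (w.symm x)) := rfl
  rw [h1, r_apply S (S.dAct_mem_Φ hw hγ), r_apply S hγ]
  rw [dAct_apply, S.co_dAct hw hγ]
  simp only [map_sub, map_smul, LinearEquiv.apply_symm_apply]

end RS
namespace RS
variable {VZ : Type*} [AddCommGroup VZ] (S : RS VZ)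

lemma coeff_unique {Δ : Finset (VZ →ₗ[ℤ] ℤ)} (hΔ : IsBase S.Φ Δ)
    {m n : (VZ →ₗ[ℤ] ℤ) → ℤ}
    (h : ∑ a ∈ Δ, m a • a = ∑ a ∈ Δ, n a • a) : ∀ a ∈ Δ, m a = n a := by
  have hz : ∑ a ∈ Δ, (m a - n a) • a = 0 := by
    simp only [sub_smul, Finset.sum_sub_distrib, h, sub_self]
  have h2 : ∑ a ∈ Δ.attach, (m a.1 - n a.1) • (a.1 : VZ →ₗ[ℤ] ℤ) = 0 := by
    rw [Finset.sum_attach Δ (fun a => (m a - n a) • a)]; exact hz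
  intro a ha
  have h3 := Fintype.linearIndependent_iff.mp hΔ.2.1 (fun a => m a.1 - n a.1) ?_ ⟨a, ha⟩
  · exact sub_eq_zero.mp h3
  · rwa [Finset.univ_eq_attach]

lemma mem_posRoots {Δ : Finset (VZ →ₗ[ℤ] ℤ)} {β : VZ →ₗ[ℤ] ℤ} :
    β ∈ PosRoots S.Φ Δ ↔ β ∈ S.Φ ∧ ∃ c : (VZ →ₗ[ℤ] ℤ) → ℕ, β = ∑ a ∈ Δ, (c a : ℤ) • a :=
  Finset.mem_filter

lemma posRoots_subset {Δ : Finset (VZ →ₗ[ℤ] ℤ)} : PosRoots S.Φ Δ ⊆ S.Φ :=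
  Finset.filter_subset _ _

lemma neg_mem_Φ {β : VZ →ₗ[ℤ] ℤ} (hβ : β ∈ S.Φ) : -β ∈ S.Φ := by
  have h := S.hrefl β hβ β hβ
  rw [S.h2 β hβ] at h
  have : β - (2 : ℤ) • β = -β := by module
  rwa [this] at h

lemma base_subset_pos {Δ : Finset (VZ →ₗ[ℤ] ℤ)} (hΔ : IsBase S.Φ Δ) :
    Δ ⊆ PosRoots S.Φ Δ := by
  intro a ha
  refine (S.mem_posRoots).mpr ⟨hΔ.1 ha, fun b => if b = a then 1 else 0, ?_⟩
  symm
  show ∑ b ∈ Δ, (((if b = a then (1:ℕ) else 0) : ℕ) : ℤ) • b = a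
  push_cast
  have h1 : ∀ b ∈ Δ, ((if b = a then (1:ℤ) else 0)) • b = if b = a then b else 0 := by
    intro b _
    split <;> simp
  rw [Finset.sum_congr rfl h1, Finset.sum_ite_eq' Δ a (fun b => b), if_pos ha]

lemma not_pos_neg {Δ : Finset (VZ →ₗ[ℤ] ℤ)} (hΔ : IsBase S.Φ Δ) {β : VZ →ₗ[ℤ] ℤ}
    (h1 : β ∈ PosRoots S.Φ Δ) (h2 : -β ∈ PosRoots S.Φ Δ) : False := by
  obtain ⟨hβΦ, c, hc⟩ := S.mem_posRoots.mp h1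
  obtain ⟨_, d, hd⟩ := S.mem_posRoots.mp h2
  have hsum : ∑ a ∈ Δ, ((c a : ℤ) + (d a : ℤ)) • a = ∑ a ∈ Δ, (0 : ℤ) • a := by
    simp only [add_smul, Finset.sum_add_distrib, ← hc, ← hd, add_neg_cancel, zero_smul,
      Finset.sum_const_zero]
  have h3 := S.coeff_unique hΔ hsum
  have hc0 : ∀ a ∈ Δ, (c a : ℤ) = 0 := by
    intro a ha
    have := h3 a ha
    have h4 : (0:ℤ) ≤ (c a : ℤ) := Int.natCast_nonneg _
    have h5 : (0:ℤ) ≤ (d a : ℤ) := Int.natCast_nonneg _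
    omega
  have : β = 0 := by
    rw [hc, Finset.sum_congr rfl (fun a ha => by rw [hc0 a ha, zero_smul]),
      Finset.sum_const_zero]
  exact S.h0 (this ▸ hβΦ)

lemma pos_or_neg {Δ : Finset (VZ →ₗ[ℤ] ℤ)} (hΔ : IsBase S.Φ Δ) {β : VZ →ₗ[ℤ] ℤ}
    (hβ : β ∈ S.Φ) : β ∈ PosRoots S.Φ Δ ∨ -β ∈ PosRoots S.Φ Δ := by
  rcases hΔ.2.2 β hβ with ⟨c, hc⟩ | ⟨c, hc⟩
  · exact Or.inl (S.mem_posRoots.mpr ⟨hβ, c, hc⟩)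
  · refine Or.inr (S.mem_posRoots.mpr ⟨S.neg_mem_Φ hβ, c, ?_⟩)
    rw [hc, neg_neg]

lemma single_coeff {β : VZ →ₗ[ℤ] ℤ} (hβΦ : β ∈ S.Φ) {a : VZ →ₗ[ℤ] ℤ} {k : ℤ}
    (hk : β = k • a) (hkpos : 0 < k) : β = a ∨ β = (2:ℤ) • a := by
  have h2 : β (S.co β) = 2 := S.h2 β hβΦ
  have h3 : k * a (S.co β) = 2 := by
    have h4 : (k • a) (S.co β) = 2 := by rw [← hk]; exact h2
    simpa [smul_eq_mul] using h4
  have hk2 : k ≤ 2 := Int.le_of_dvd (by norm_num) ⟨a (S.co β), h3.symm⟩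
  have : k = 1 ∨ k = 2 := by omega
  rcases this with h | h
  · left; rw [hk, h, one_smul]
  · right; rw [hk, h]

lemma dAct_r_self {a : VZ →ₗ[ℤ] ℤ} (ha : a ∈ S.Φ) : dAct (S.r a) a = -a := by
  rw [S.dAct_r ha, S.h2 a ha]
  module

lemma reflect_rep {Δ : Finset (VZ →ₗ[ℤ] ℤ)} {a β : VZ →ₗ[ℤ] ℤ} (ha : a ∈ Δ)
    {c : (VZ →ₗ[ℤ] ℤ) → ℕ} (hc : β = ∑ b ∈ Δ, (c b : ℤ) • b) :
    β - β (S.co a) • a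
      = ∑ b' ∈ Δ, ((c b' : ℤ) - (if b' = a then β (S.co a) else 0)) • b' := by
  simp only [sub_smul, Finset.sum_sub_distrib, ← hc]
  congr 1
  have : ∀ b' ∈ Δ, (if b' = a then β (S.co a) else 0) • b'
      = if b' = a then β (S.co a) • b' else 0 := by
    intro b' _; split <;> simp
  rw [Finset.sum_congr rfl this, Finset.sum_ite_eq' Δ a (fun b' => β (S.co a) • b'),
    if_pos ha]

lemma reflect_pos {Δ : Finset (VZ →ₗ[ℤ] ℤ)} (hΔ : IsBase S.Φ Δ) {a β : VZ →ₗ[ℤ] ℤ}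
    (ha : a ∈ Δ) (hβΦ : β ∈ S.Φ) {c : (VZ →ₗ[ℤ] ℤ) → ℕ}
    (hc : β = ∑ b ∈ Δ, (c b : ℤ) • b) {b : VZ →ₗ[ℤ] ℤ} (hb : b ∈ Δ) (hba : b ≠ a)
    (hcb : c b ≠ 0) : β - β (S.co a) • a ∈ PosRoots S.Φ Δ := by
  have haΦ : a ∈ S.Φ := hΔ.1 ha
  have hγΦ : β - β (S.co a) • a ∈ S.Φ := S.hrefl a haΦ β hβΦ
  have hrep := S.reflect_rep ha hc
  rcases S.pos_or_neg hΔ hγΦ with h | h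
  · exact h
  · exfalso
    obtain ⟨_, d, hd⟩ := S.mem_posRoots.mp h
    have hd' : β - β (S.co a) • a = ∑ b' ∈ Δ, (-(d b' : ℤ)) • b' := by
      rw [← neg_neg (β - β (S.co a) • a), hd, ← Finset.sum_neg_distrib]
      simp [neg_smul]
    have := S.coeff_unique hΔ (hrep.symm.trans hd') b hb
    rw [if_neg hba] at this
    have h4 : (0:ℤ) ≤ (d b : ℤ) := Int.natCast_nonneg _
    have h5 : (1:ℤ) ≤ (c b : ℤ) := by exact_mod_cast Nat.one_le_iff_ne_zero.mpr hcb
    omega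

lemma pos_reflect {Δ : Finset (VZ →ₗ[ℤ] ℤ)} (hΔ : IsBase S.Φ Δ) {a : VZ →ₗ[ℤ] ℤ}
    (ha : a ∈ Δ) {β : VZ →ₗ[ℤ] ℤ} (hβ : β ∈ PosRoots S.Φ Δ)
    (h1 : β ≠ a) (h2 : β ≠ (2:ℤ) • a) : dAct (S.r a) β ∈ PosRoots S.Φ Δ := by
  have haΦ : a ∈ S.Φ := hΔ.1 ha
  obtain ⟨hβΦ, c, hc⟩ := S.mem_posRoots.mp hβ
  rw [S.dAct_r haΦ]
  have hex : ∃ b ∈ Δ, b ≠ a ∧ c b ≠ 0 := by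
    by_contra hall
    push_neg at hall
    have hβa : β = (c a : ℤ) • a := by
      rw [hc, Finset.sum_eq_single_of_mem a ha]
      intro b hb hne
      rw [hall b hb hne]
      simp
    have hca : c a ≠ 0 := by
      intro h
      rw [h] at hβa
      simp at hβa
      exact S.h0 (hβa ▸ hβΦ)
    rcases S.single_coeff hβΦ hβa (by exact_mod_cast Nat.pos_of_ne_zero hca) with h | h
    · exact h1 h
    · exact h2 h
  obtain ⟨b, hb, hba, hcb⟩ := hex
  exact S.reflect_pos hΔ ha hβΦ hc hb hba hcb

end RS
namespace RS
variable {VZ : Type*} [AddCommGroup VZ] (S : RS VZ)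

/-- canonical pairing -/
def Bf (φ ψ : VZ →ₗ[ℤ] ℤ) : ℤ := ∑ γ ∈ S.Φ, φ (S.co γ) * ψ (S.co γ)

lemma Bf_self_pos {β : VZ →ₗ[ℤ] ℤ} (hβ : β ∈ S.Φ) : 0 < S.Bf β β := by
  have h1 : β (S.co β) * β (S.co β) ≤ S.Bf β β :=
    Finset.single_le_sum (f := fun γ => β (S.co γ) * β (S.co γ))
      (fun γ _ => mul_self_nonneg _) hβ
  rw [S.h2 β hβ] at h1
  omega

/-- auxiliary vector -/
def tvec (γ : VZ →ₗ[ℤ] ℤ) : VZ := ∑ δ ∈ S.Φ, γ (S.co δ) • S.co δ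

lemma apply_tvec (φ γ : VZ →ₗ[ℤ] ℤ) : φ (S.tvec γ) = S.Bf φ γ := by
  simp only [tvec, map_sum, map_zsmul, Bf, smul_eq_mul]
  exact Finset.sum_congr rfl fun δ _ => mul_comm _ _

lemma two_tvec {γ : VZ →ₗ[ℤ] ℤ} (hγ : γ ∈ S.Φ) :
    S.tvec γ + S.tvec γ = S.Bf γ γ • S.co γ := by
  have h1 : S.r γ (S.tvec γ) = S.tvec γ - S.Bf γ γ • S.co γ := by
    rw [S.r_apply hγ, S.apply_tvec γ γ]
  have hgg : ∀ δ ∈ S.Φ, dAct (S.r γ) (dAct (S.r γ) δ) = δ := by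
    intro δ _
    rw [← dAct_mul, S.r_mul_r hγ, dAct_one]
  have h2 : S.r γ (S.tvec γ) = -S.tvec γ := by
    rw [tvec, map_sum]
    simp only [map_zsmul]
    have hco : ∀ δ ∈ S.Φ, S.r γ (S.co δ) = S.co (dAct (S.r γ) δ) := by
      intro δ hδ
      rw [S.co_dAct (S.r_mem_W hγ) hδ]
    rw [Finset.sum_congr rfl fun δ hδ => by rw [hco δ hδ]]
    have hmain : ∑ δ ∈ S.Φ, γ (S.co δ) • S.co (dAct (S.r γ) δ)
        = ∑ δ ∈ S.Φ, -(γ (S.co δ) • S.co δ) := by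
      refine Finset.sum_nbij' (i := fun δ => dAct (S.r γ) δ) (j := fun δ => dAct (S.r γ) δ)
        (fun δ hδ => S.dAct_mem_Φ (S.r_mem_W hγ) hδ)
        (fun δ hδ => S.dAct_mem_Φ (S.r_mem_W hγ) hδ)
        (fun δ hδ => hgg δ hδ) (fun δ hδ => hgg δ hδ) ?_
      intro δ hδ
      show γ (S.co δ) • S.co (dAct (S.r γ) δ) = -(γ (S.co (dAct (S.r γ) δ)) • S.co (dAct (S.r γ) δ))
      have hval : γ (S.co (dAct (S.r γ) δ)) = -(γ (S.co δ)) := by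
        rw [← hco δ hδ, S.r_apply hγ]
        simp only [map_sub, map_zsmul, S.h2 γ hγ, smul_eq_mul]
        ring
      rw [hval, neg_smul, neg_neg]
    rw [hmain, ← Finset.sum_neg_distrib]
  have h3 : S.tvec γ - S.Bf γ γ • S.co γ = -S.tvec γ := h1.symm.trans h2
  have h4 : S.tvec γ + S.tvec γ
      = ((S.tvec γ - S.Bf γ γ • S.co γ) + S.Bf γ γ • S.co γ) + S.tvec γ := by abel
  rw [h4, h3]
  abel

lemma two_Bf {γ : VZ →ₗ[ℤ] ℤ} (hγ : γ ∈ S.Φ) (φ : VZ →ₗ[ℤ] ℤ) :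
    2 * S.Bf φ γ = S.Bf γ γ * φ (S.co γ) := by
  have := congrArg φ (S.two_tvec hγ)
  rw [map_add, map_zsmul, S.apply_tvec φ γ, smul_eq_mul] at this
  linarith

section Free
variable [Module.Free ℤ VZ]

lemma smul_cancel (_S : RS VZ) {k : ℤ} (hk : k ≠ 0) {v w : VZ} (h : k • v = k • w) : v = w := by
  have h1 : k • (v - w) = 0 := by rw [smul_sub, h, sub_self]
  rcases smul_eq_zero.mp h1 with h2 | h2
  · exact absurd h2 hk
  · exact sub_eq_zero.mp h2

lemma co_neg {γ : VZ →ₗ[ℤ] ℤ} (hγ : γ ∈ S.Φ) : S.co (-γ) = -S.co γ := by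
  have hnγ : -γ ∈ S.Φ := S.neg_mem_Φ hγ
  have ht : S.tvec (-γ) = -S.tvec γ := by
    simp only [tvec, LinearMap.neg_apply, neg_smul, ← Finset.sum_neg_distrib]
  have hB : S.Bf (-γ) (-γ) = S.Bf γ γ := by
    simp only [Bf, LinearMap.neg_apply, neg_mul_neg]
  have h1 := S.two_tvec hnγ
  rw [ht, hB] at h1
  have h2 := S.two_tvec hγ
  have h3 : S.Bf γ γ • S.co (-γ) = S.Bf γ γ • (-S.co γ) := by
    rw [smul_neg, ← h2, ← h1]
    abel
  exact S.smul_cancel (by have := S.Bf_self_pos hγ; omega) h3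

lemma co_two {γ : VZ →ₗ[ℤ] ℤ} (hγ : γ ∈ S.Φ) (h2γ : (2:ℤ) • γ ∈ S.Φ) :
    S.co γ = (2:ℤ) • S.co ((2:ℤ) • γ) := by
  have ht : S.tvec ((2:ℤ) • γ) = (2:ℤ) • S.tvec γ := by
    simp only [tvec, LinearMap.smul_apply, smul_eq_mul, Finset.smul_sum, smul_smul]
  have hB : S.Bf ((2:ℤ) • γ) ((2:ℤ) • γ) = 4 * S.Bf γ γ := by
    simp only [Bf, LinearMap.smul_apply, smul_eq_mul, Finset.mul_sum]
    exact Finset.sum_congr rfl fun δ _ => by ring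
  have h1 := S.two_tvec h2γ
  rw [ht, hB] at h1
  have h2 := S.two_tvec hγ
  have h3 : (2 * S.Bf γ γ) • S.co γ = (2 * S.Bf γ γ) • ((2:ℤ) • S.co ((2:ℤ) • γ)) := by
    have e1 : (2 * S.Bf γ γ) • S.co γ = (2:ℤ) • (S.Bf γ γ • S.co γ) := by
      rw [smul_smul]
    have e2 : (2 * S.Bf γ γ) • ((2:ℤ) • S.co ((2:ℤ) • γ))
        = (4 * S.Bf γ γ) • S.co ((2:ℤ) • γ) := by
      rw [smul_smul]
      congr 1
      ring
    rw [e1, e2, ← h2, ← h1, smul_add]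
  exact S.smul_cancel (by have := S.Bf_self_pos hγ; omega) h3

lemma r_two {γ : VZ →ₗ[ℤ] ℤ} (hγ : γ ∈ S.Φ) (h2γ : (2:ℤ) • γ ∈ S.Φ) :
    S.r ((2:ℤ) • γ) = S.r γ := by
  ext x
  rw [S.r_apply h2γ, S.r_apply hγ]
  congr 1
  rw [LinearMap.smul_apply, smul_eq_mul, mul_comm, mul_smul, ← S.co_two hγ h2γ]

lemma r_neg {γ : VZ →ₗ[ℤ] ℤ} (hγ : γ ∈ S.Φ) : S.r (-γ) = S.r γ := by
  ext x
  rw [S.r_apply (S.neg_mem_Φ hγ), S.r_apply hγ, S.co_neg hγ]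
  simp

end Free
end RS
namespace RS
variable {VZ : Type*} [AddCommGroup VZ] (S : RS VZ)

/-- the subgroup generated by simple reflections -/
noncomputable def WD (Δ : Finset (VZ →ₗ[ℤ] ℤ)) : Subgroup (VZ ≃ₗ[ℤ] VZ) :=
  Subgroup.closure {e | ∃ a ∈ Δ, e = S.r a}

lemma WD_le_W {Δ : Finset (VZ →ₗ[ℤ] ℤ)} (hΔ : IsBase S.Φ Δ) : S.WD Δ ≤ S.W := by
  apply Subgroup.closure_le _ |>.mpr
  rintro e ⟨a, ha, rfl⟩
  exact S.r_mem_W (hΔ.1 ha)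

lemma Bf_sum {Δ : Finset (VZ →ₗ[ℤ] ℤ)} (φ : VZ →ₗ[ℤ] ℤ) (c : (VZ →ₗ[ℤ] ℤ) → ℤ) :
    S.Bf φ (∑ a ∈ Δ, c a • a) = ∑ a ∈ Δ, c a * S.Bf φ a := by
  simp only [Bf, LinearMap.sum_apply, LinearMap.smul_apply, smul_eq_mul, Finset.mul_sum]
  rw [Finset.sum_comm]
  refine Finset.sum_congr rfl fun a _ => Finset.sum_congr rfl fun γ _ => by ring

variable [Module.Free ℤ VZ]

lemma r_mem_WD_aux {Δ : Finset (VZ →ₗ[ℤ] ℤ)} (hΔ : IsBase S.Φ Δ) :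
    ∀ n : ℕ, ∀ β, β ∈ S.Φ → ∀ c : (VZ →ₗ[ℤ] ℤ) → ℕ,
      β = ∑ a ∈ Δ, (c a : ℤ) • a → ∑ a ∈ Δ, c a = n → S.r β ∈ S.WD Δ := by
  intro n
  induction n using Nat.strong_induction_on with
  | _ n ih =>
  intro β hβΦ c hc hn
  have hBpos : 0 < S.Bf β β := S.Bf_self_pos hβΦ
  have hBsum : S.Bf β β = ∑ a ∈ Δ, (c a : ℤ) * S.Bf β a := by
    have h := S.Bf_sum (Δ := Δ) β (fun a => (c a : ℤ))
    rw [← hc] at h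
    exact h
  have hex : ∃ a ∈ Δ, c a ≠ 0 ∧ 0 < S.Bf β a := by
    by_contra hcon
    push_neg at hcon
    have : ∑ a ∈ Δ, (c a : ℤ) * S.Bf β a ≤ 0 := by
      apply Finset.sum_nonpos
      intro a ha
      by_cases h0 : c a = 0
      · simp [h0]
      · exact mul_nonpos_of_nonneg_of_nonpos (Int.natCast_nonneg _) (hcon a ha h0)
    omega
  obtain ⟨a, haΔ, hca, hBa⟩ := hex
  have haΦ : a ∈ S.Φ := hΔ.1 haΔ
  have hm : 0 < β (S.co a) := by
    have h := S.two_Bf haΦ β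
    by_contra hm'
    push_neg at hm'
    have h1 : S.Bf a a * β (S.co a) ≤ 0 :=
      mul_nonpos_of_nonneg_of_nonpos (le_of_lt (S.Bf_self_pos haΦ)) hm'
    omega
  by_cases hall : ∀ b ∈ Δ, b ≠ a → c b = 0
  · have hβa : β = (c a : ℤ) • a := by
      rw [hc, Finset.sum_eq_single_of_mem a haΔ]
      intro b hb hne
      rw [hall b hb hne]
      simp
    have hca' : (0:ℤ) < (c a : ℤ) := by exact_mod_cast Nat.pos_of_ne_zero hca
    rcases S.single_coeff hβΦ hβa hca' with h | h
    · subst h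
      exact Subgroup.subset_closure ⟨β, haΔ, rfl⟩
    · rw [h, S.r_two haΦ (h ▸ hβΦ)]
      exact Subgroup.subset_closure ⟨a, haΔ, rfl⟩
  · push_neg at hall
    obtain ⟨b, hbΔ, hba, hcb⟩ := hall
    have hγpos : β - β (S.co a) • a ∈ PosRoots S.Φ Δ :=
      S.reflect_pos hΔ haΔ hβΦ hc hbΔ hba hcb
    obtain ⟨hγΦ, d, hd⟩ := S.mem_posRoots.mp hγpos
    have hrep := S.reflect_rep haΔ hc
    have hcoeff : ∀ b' ∈ Δ, (d b' : ℤ)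
        = (c b' : ℤ) - (if b' = a then β (S.co a) else 0) :=
      S.coeff_unique hΔ (hd.symm.trans hrep)
    -- height decreases
    have hsum : (∑ b' ∈ Δ, (d b' : ℤ)) = (n : ℤ) - β (S.co a) := by
      rw [Finset.sum_congr rfl hcoeff, Finset.sum_sub_distrib, Finset.sum_ite_eq' Δ a
        (fun _ => β (S.co a)), if_pos haΔ, ← hn]
      push_cast
      ring
    have hlt : ∑ b' ∈ Δ, d b' < n := by
      have h1 : ((∑ b' ∈ Δ, d b' : ℕ) : ℤ) = (n:ℤ) - β (S.co a) := by
        exact_mod_cast hsum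
      omega
    have hrγ : S.r (β - β (S.co a) • a) ∈ S.WD Δ :=
      ih _ hlt _ hγΦ d hd rfl
    -- β = dAct (S.r a) γ
    have hγa : (β - β (S.co a) • a) (S.co a) = -(β (S.co a)) := by
      simp only [LinearMap.sub_apply, LinearMap.smul_apply, smul_eq_mul, S.h2 a haΦ]
      ring
    have hβeq : dAct (S.r a) (β - β (S.co a) • a) = β := by
      rw [S.dAct_r haΦ, hγa]
      module
    have hconj := S.r_conj (S.r_mem_W haΦ) hγΦ
    rw [hβeq] at hconj
    rw [hconj]
    have hgen : S.r a ∈ S.WD Δ := Subgroup.subset_closure ⟨a, haΔ, rfl⟩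
    exact mul_mem (mul_mem hgen hrγ) (inv_mem hgen)

lemma r_mem_WD {Δ : Finset (VZ →ₗ[ℤ] ℤ)} (hΔ : IsBase S.Φ Δ) {β : VZ →ₗ[ℤ] ℤ}
    (hβ : β ∈ S.Φ) : S.r β ∈ S.WD Δ := by
  rcases S.pos_or_neg hΔ hβ with h | h
  · obtain ⟨_, c, hc⟩ := S.mem_posRoots.mp h
    exact S.r_mem_WD_aux hΔ _ β hβ c hc rfl
  · obtain ⟨hβ', c, hc⟩ := S.mem_posRoots.mp h
    have := S.r_mem_WD_aux hΔ _ (-β) hβ' c hc rfl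
    rwa [S.r_neg hβ] at this

lemma W_le_WD {Δ : Finset (VZ →ₗ[ℤ] ℤ)} (hΔ : IsBase S.Φ Δ) : S.W ≤ S.WD Δ := by
  apply Subgroup.closure_le _ |>.mpr
  rintro e ⟨α, hα, he⟩
  have : e = S.r α := LinearEquiv.ext fun x => by rw [he x, S.r_apply hα]
  rw [this]
  exact S.r_mem_WD hΔ hα

end RS
namespace RS
variable {VZ : Type*} [AddCommGroup VZ] (S : RS VZ)

lemma prod_map_r_mem_W {Δ : Finset (VZ →ₗ[ℤ] ℤ)} (hΔ : IsBase S.Φ Δ)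
    {l : List (VZ →ₗ[ℤ] ℤ)} (hl : ∀ a ∈ l, a ∈ Δ) : (l.map S.r).prod ∈ S.W := by
  apply Subgroup.list_prod_mem
  intro x hx
  obtain ⟨a, ha, rfl⟩ := List.mem_map.mp hx
  exact S.r_mem_W (hΔ.1 (hl a ha))

lemma roots_of_word {Δ : Finset (VZ →ₗ[ℤ] ℤ)} :
    ∀ l : List (VZ ≃ₗ[ℤ] VZ), (∀ y ∈ l, ∃ a ∈ Δ, y = S.r a) →
      ∃ rl : List (VZ →ₗ[ℤ] ℤ), (∀ a ∈ rl, a ∈ Δ) ∧ rl.map S.r = l := by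
  intro l
  induction l with
  | nil => exact fun _ => ⟨[], by simp, by simp⟩
  | cons y t iht =>
    intro h
    obtain ⟨a, ha, rfl⟩ := h y List.mem_cons_self
    obtain ⟨rl, h1, h2⟩ := iht (fun z hz => h z (List.mem_cons_of_mem _ hz))
    refine ⟨a :: rl, ?_, by simp [h2]⟩
    intro b hb
    rcases List.mem_cons.mp hb with rfl | hb
    · exact ha
    · exact h1 b hb

lemma word_of_mem_WD {Δ : Finset (VZ →ₗ[ℤ] ℤ)} (hΔ : IsBase S.Φ Δ)
    {u : VZ ≃ₗ[ℤ] VZ} (hu : u ∈ S.WD Δ) :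
    ∃ l : List (VZ →ₗ[ℤ] ℤ), (∀ a ∈ l, a ∈ Δ) ∧ (l.map S.r).prod = u := by
  set G : Set (VZ ≃ₗ[ℤ] VZ) := {e | ∃ a ∈ Δ, e = S.r a} with hG
  have hu' : u ∈ Submonoid.closure (G ∪ G⁻¹) := by
    rw [← Subgroup.closure_toSubmonoid]
    exact hu
  obtain ⟨l, hl, hprod⟩ := Submonoid.exists_list_of_mem_closure hu'
  have hlG : ∀ y ∈ l, ∃ a ∈ Δ, y = S.r a := by
    intro y hy
    rcases hl y hy with h | h
    · exact h
    · obtain ⟨a, ha, hay⟩ := h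
      refine ⟨a, ha, ?_⟩
      have h2 : y⁻¹ = S.r a := hay
      rw [← inv_inv y, h2, S.r_inv (hΔ.1 ha)]
  obtain ⟨rl, h1, h2⟩ := S.roots_of_word l hlG
  exact ⟨rl, h1, by rw [h2, hprod]⟩

variable [Module.Free ℤ VZ]

lemma stab_eq_one {Δ : Finset (VZ →ₗ[ℤ] ℤ)} (hΔ : IsBase S.Φ Δ) {u : VZ ≃ₗ[ℤ] VZ}
    (hu : u ∈ S.W) (hstab : ∀ β ∈ PosRoots S.Φ Δ, dAct u β ∈ PosRoots S.Φ Δ) :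
    u = 1 := by
  by_contra hu1
  have huD : u ∈ S.WD Δ := S.W_le_WD hΔ hu
  set NN : Set ℕ :=
    {k | ∃ l : List (VZ →ₗ[ℤ] ℤ), (∀ a ∈ l, a ∈ Δ) ∧ (l.map S.r).prod = u ∧ l.length = k}
    with hNN
  have hne : NN.Nonempty := by
    obtain ⟨l, h1, h2⟩ := S.word_of_mem_WD hΔ huD
    exact ⟨l.length, l, h1, h2, rfl⟩
  obtain ⟨l, hlΔ, hlprod, hlk⟩ := Nat.sInf_mem hne
  rcases l.eq_nil_or_concat' with rfl | ⟨l₁, a, rfl⟩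
  · exact hu1 (by simpa using hlprod.symm)
  have haΔ : a ∈ Δ := hlΔ a (by simp)
  have haΦ : a ∈ S.Φ := hΔ.1 haΔ
  have hl₁Δ : ∀ b ∈ l₁, b ∈ Δ := fun b hb => hlΔ b (by simp [hb])
  have huprod : u = (l₁.map S.r).prod * S.r a := by
    rw [← hlprod]
    simp
  set m := l₁.length with hm
  set v : ℕ → (VZ ≃ₗ[ℤ] VZ) := fun i => ((l₁.drop i).map S.r).prod with hv
  set P : ℕ → Prop := fun i => dAct (v i) a ∈ PosRoots S.Φ Δ with hP
  have hPm : P m := by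
    have hd : List.drop m l₁ = [] := by rw [hm]; exact List.drop_length
    have h1 : v m = 1 := by simp only [hv, hd, List.map_nil, List.prod_nil]
    simp only [hP, h1, dAct_one]
    exact S.base_subset_pos hΔ haΔ
  have hP0 : ¬ P 0 := by
    have hv0 : v 0 = (l₁.map S.r).prod := by simp [hv]
    have hua : dAct u a ∈ PosRoots S.Φ Δ := hstab a (S.base_subset_pos hΔ haΔ)
    have hru : dAct u a = -(dAct (v 0) a) := by
      rw [huprod, dAct_mul, S.dAct_r_self haΦ, dAct_neg, hv0]
    intro hP0'
    have : -(dAct (v 0) a) ∈ PosRoots S.Φ Δ := hru ▸ hua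
    exact S.not_pos_neg hΔ hP0' this
  have hPj : ∃ j, P j := ⟨m, hPm⟩
  set j := Nat.find hPj with hj
  have hjspec : P j := Nat.find_spec hPj
  have hjm : j ≤ m := Nat.find_min' hPj hPm
  have hj0 : j ≠ 0 := fun h => hP0 (h ▸ hjspec)
  set i := j - 1 with hi
  have hij : i < j := by omega
  have hnPi : ¬ P i := Nat.find_min hPj hij
  have him : i < m := by omega
  have hji : j = i + 1 := by omega
  -- v i = S.r b * v (i+1)
  set b := l₁[i] with hb
  have hbΔ : b ∈ Δ := hl₁Δ b (List.getElem_mem him)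
  have hbΦ : b ∈ S.Φ := hΔ.1 hbΔ
  have hvi : v i = S.r b * v (i + 1) := by
    simp only [hv]
    rw [List.drop_eq_getElem_cons him, List.map_cons, List.prod_cons]
  set γ := dAct (v (i + 1)) a with hγ
  have hγpos : γ ∈ PosRoots S.Φ Δ := by
    have h1 := hjspec
    rw [hji] at h1
    exact h1
  have hγref : dAct (S.r b) γ ∉ PosRoots S.Φ Δ := by
    rw [hγ, ← dAct_mul, ← hvi]
    exact hnPi
  have hcase : γ = b ∨ γ = (2:ℤ) • b := by
    by_contra hcon
    push_neg at hcon
    exact hγref (S.pos_reflect hΔ hbΔ hγpos hcon.1 hcon.2)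
  have hγΦ : γ ∈ S.Φ := S.posRoots_subset hγpos
  have hrγ : S.r γ = S.r b := by
    rcases hcase with h | h
    · rw [h]
    · rw [h]
      exact S.r_two hbΦ (h ▸ hγΦ)
  have hvW : v (i + 1) ∈ S.W :=
    S.prod_map_r_mem_W hΔ (fun c hc => hl₁Δ c (List.mem_of_mem_drop hc))
  have hconj : S.r γ = v (i + 1) * S.r a * (v (i + 1))⁻¹ :=
    S.r_conj hvW haΦ
  have hswap : S.r b * v (i + 1) = v (i + 1) * S.r a := by
    rw [← hrγ, hconj]
    rw [inv_mul_cancel_right]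
  -- build shorter word
  set l' := l₁.take i ++ l₁.drop (i + 1) with hl'
  have hl'Δ : ∀ c ∈ l', c ∈ Δ := by
    intro c hc
    rcases List.mem_append.mp hc with h | h
    · exact hl₁Δ c (List.mem_of_mem_take h)
    · exact hl₁Δ c (List.mem_of_mem_drop h)
  have hl'prod : (l'.map S.r).prod = u := by
    have hsplit : (l₁.map S.r).prod
        = ((l₁.take i).map S.r).prod * ((l₁.drop i).map S.r).prod := by
      rw [← List.prod_append, ← List.map_append, List.take_append_drop]
    set T := ((l₁.take i).map S.r).prod with hT
    calc (l'.map S.r).prod = T * v (i+1) := by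
          rw [hl', List.map_append, List.prod_append]
      _ = T * (v (i+1) * (S.r a * S.r a)) := by rw [S.r_mul_r haΦ, mul_one]
      _ = T * ((v (i+1) * S.r a) * S.r a) := by rw [mul_assoc (v (i+1)) (S.r a) (S.r a)]
      _ = T * ((S.r b * v (i+1)) * S.r a) := by rw [hswap]
      _ = T * (v i * S.r a) := by rw [hvi]
      _ = (T * v i) * S.r a := by rw [mul_assoc]
      _ = (l₁.map S.r).prod * S.r a := by rw [hsplit]
      _ = u := huprod.symm
  have hl'len : l'.length < sInf NN := by
    have h1 : l'.length = i + (m - (i + 1)) := by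
      simp [hl', hm]
      omega
    have h2 : (l₁ ++ [a]).length = m + 1 := by simp [hm]
    omega
  have hmem : l'.length ∈ NN := ⟨l', hl'Δ, hl'prod, rfl⟩
  have := Nat.sInf_le hmem
  omega

end RS
namespace RS
variable {VZ : Type*} [AddCommGroup VZ] (S : RS VZ)
variable {M : Type*} [AddCommGroup M] [LinearOrder M] [IsOrderedAddMonoid M]

/-- number of positive roots made negative -/
noncomputable def nneg (Δ : Finset (VZ →ₗ[ℤ] ℤ)) (L : (VZ →ₗ[ℤ] ℤ) →+ M)
    (w : VZ ≃ₗ[ℤ] VZ) : ℕ :=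
  ((PosRoots S.Φ Δ).filter fun β => L (dAct w β) < 0).card

lemma descent {Δ : Finset (VZ →ₗ[ℤ] ℤ)} (hΔ : IsBase S.Φ Δ)
    (L : (VZ →ₗ[ℤ] ℤ) →+ M) {w : VZ ≃ₗ[ℤ] VZ} {a : VZ →ₗ[ℤ] ℤ} (ha : a ∈ Δ)
    (hwa : L (dAct w a) < 0) : S.nneg Δ L (w * S.r a) < S.nneg Δ L w := by
  have haΦ : a ∈ S.Φ := hΔ.1 ha
  have haPos : a ∈ PosRoots S.Φ Δ := S.base_subset_pos hΔ ha
  set T := (PosRoots S.Φ Δ).filter fun β => L (dAct w β) < 0 with hT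
  set S' := (PosRoots S.Φ Δ).filter fun β => L (dAct (w * S.r a) β) < 0 with hS'
  have haT : a ∈ T := Finset.mem_filter.mpr ⟨haPos, hwa⟩
  have hwa' : 0 < L (dAct w (-a)) := by
    rw [dAct_neg, map_neg]
    exact neg_pos.mpr hwa
  have hmap : ∀ β ∈ S', dAct (S.r a) β ∈ T.erase a := by
    intro β hβ
    obtain ⟨hβPos, hβL⟩ := Finset.mem_filter.mp hβ
    rw [dAct_mul] at hβL
    have hβa : β ≠ a := by
      rintro rfl
      rw [S.dAct_r_self haΦ] at hβL
      exact lt_asymm hβL hwa'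
    have hβ2a : β ≠ (2:ℤ) • a := by
      rintro rfl
      rw [dAct_zsmul, S.dAct_r_self haΦ, dAct_zsmul, map_zsmul, two_zsmul] at hβL
      have := add_pos hwa' hwa'
      rw [dAct_neg, map_neg] at hβL this
      exact lt_asymm hβL this
    have hγPos : dAct (S.r a) β ∈ PosRoots S.Φ Δ := S.pos_reflect hΔ ha hβPos hβa hβ2a
    refine Finset.mem_erase.mpr ⟨?_, Finset.mem_filter.mpr ⟨hγPos, hβL⟩⟩
    intro hγa
    have hβeq : β = -a := by
      have h1 : dAct (S.r a) (dAct (S.r a) β) = β := by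
        rw [← dAct_mul, S.r_mul_r haΦ, dAct_one]
      rw [hγa, S.dAct_r_self haΦ] at h1
      exact h1.symm
    rw [hβeq] at hβPos
    exact S.not_pos_neg hΔ haPos hβPos
  have hinj : Set.InjOn (dAct (S.r a)) S' := fun x _ y _ h => dAct_injective _ h
  have hcard : S'.card ≤ (T.erase a).card := Finset.card_le_card_of_injOn _ hmap hinj
  have hlt : (T.erase a).card < T.card := Finset.card_erase_lt_of_mem haT
  calc S'.card ≤ (T.erase a).card := hcard
    _ < T.card := hlt

lemma exists_pos_chamber {Δ : Finset (VZ →ₗ[ℤ] ℤ)} (hΔ : IsBase S.Φ Δ)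
    (L : (VZ →ₗ[ℤ] ℤ) →+ M) (hL : ∀ β ∈ S.Φ, L β ≠ 0) :
    ∃ w ∈ S.W, ∀ a ∈ Δ, 0 < L (dAct w a) := by
  set NNs : Set ℕ := {n | ∃ w ∈ S.W, S.nneg Δ L w = n} with hNNs
  have hne : NNs.Nonempty := ⟨S.nneg Δ L 1, 1, one_mem _, rfl⟩
  obtain ⟨w, hwW, hwn⟩ := Nat.sInf_mem hne
  refine ⟨w, hwW, fun a ha => ?_⟩
  by_contra hcon
  have hΦ : dAct w a ∈ S.Φ := S.dAct_mem_Φ hwW (hΔ.1 ha)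
  have hlt : L (dAct w a) < 0 :=
    lt_of_le_of_ne (not_lt.mp hcon) (hL _ hΦ)
  have hdesc := S.descent hΔ L ha hlt
  have hmem : S.nneg Δ L (w * S.r a) ∈ NNs :=
    ⟨w * S.r a, mul_mem hwW (S.r_mem_W (hΔ.1 ha)), rfl⟩
  have := Nat.sInf_le hmem
  omega

lemma pos_on_posRoots {Δ : Finset (VZ →ₗ[ℤ] ℤ)} (L : (VZ →ₗ[ℤ] ℤ) →+ M)
    {w : VZ ≃ₗ[ℤ] VZ} (hw : ∀ a ∈ Δ, 0 < L (dAct w a)) :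
    ∀ β ∈ PosRoots S.Φ Δ, 0 < L (dAct w β) := by
  intro β hβ
  obtain ⟨hβΦ, c, hc⟩ := S.mem_posRoots.mp hβ
  have h1 : dAct w β = ∑ a ∈ Δ, (c a : ℤ) • dAct w a := by
    rw [hc, dAct_sum]
    exact Finset.sum_congr rfl fun a _ => dAct_zsmul w _ a
  have h2 : L (dAct w β) = ∑ a ∈ Δ, (c a) • L (dAct w a) := by
    rw [h1, map_sum]
    exact Finset.sum_congr rfl fun a _ => by rw [map_zsmul, natCast_zsmul]
  have hex : ∃ a ∈ Δ, c a ≠ 0 := by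
    by_contra hall
    push_neg at hall
    have : β = 0 := by
      rw [hc]
      apply Finset.sum_eq_zero
      intro a ha
      rw [hall a ha]
      simp
    exact S.h0 (this ▸ hβΦ)
  obtain ⟨a, ha, hca⟩ := hex
  rw [h2]
  refine Finset.sum_pos' (fun b hb => ?_) ⟨a, ha, ?_⟩
  · exact nsmul_nonneg (le_of_lt (hw b hb)) _
  · exact nsmul_pos (hw a ha) hca

theorem abstract_main {Δ : Finset (VZ →ₗ[ℤ] ℤ)} [Module.Free ℤ VZ]
    (hΔ : IsBase S.Φ Δ) (L : (VZ →ₗ[ℤ] ℤ) →+ M) (hL : ∀ β ∈ S.Φ, L β ≠ 0) :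
    ∃ w ∈ S.W, (∀ a ∈ Δ, 0 < L (dAct w a)) ∧
      ∀ w' ∈ S.W, (∀ a ∈ Δ, 0 < L (dAct w' a)) → w' = w := by
  obtain ⟨w, hwW, hwpos⟩ := S.exists_pos_chamber hΔ L hL
  refine ⟨w, hwW, hwpos, fun w' hw'W hw'pos => ?_⟩
  have hstab : ∀ β ∈ PosRoots S.Φ Δ, dAct (w⁻¹ * w') β ∈ PosRoots S.Φ Δ := by
    intro β hβ
    rw [dAct_mul]
    have hγΦ : dAct w' β ∈ S.Φ := S.dAct_mem_Φ hw'W (S.posRoots_subset hβ)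
    have hγL : 0 < L (dAct w' β) := S.pos_on_posRoots L hw'pos β hβ
    have hδΦ : dAct w⁻¹ (dAct w' β) ∈ S.Φ := S.dAct_mem_Φ (inv_mem hwW) hγΦ
    rcases S.pos_or_neg hΔ hδΦ with h | h
    · exact h
    · exfalso
      have h1 : 0 < L (dAct w (-(dAct w⁻¹ (dAct w' β)))) :=
        S.pos_on_posRoots L hwpos _ h
      rw [dAct_neg, map_neg, dAct_dAct_inv] at h1
      exact lt_asymm hγL (neg_pos.mp h1)
  have hu : w⁻¹ * w' = 1 :=
    S.stab_eq_one hΔ (mul_mem (inv_mem hwW) hw'W) hstab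
  have := inv_mul_eq_one.mp hu
  exact this.symm

end RS
namespace RS
variable {VZ : Type*} [AddCommGroup VZ] (S : RS VZ)

lemma two_smul_mem_pos {Δ : Finset (VZ →ₗ[ℤ] ℤ)} {a : VZ →ₗ[ℤ] ℤ} (ha : a ∈ Δ)
    (h : (2:ℤ) • a ∈ S.Φ) : (2:ℤ) • a ∈ PosRoots S.Φ Δ := by
  refine (S.mem_posRoots).mpr ⟨h, fun b => if b = a then 2 else 0, ?_⟩
  symm
  show ∑ b ∈ Δ, (((if b = a then (2:ℕ) else 0) : ℕ) : ℤ) • b = (2:ℤ) • a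
  push_cast
  have h1 : ∀ b ∈ Δ, ((if b = a then (2:ℤ) else 0)) • b
      = if b = a then (2:ℤ) • b else 0 := by
    intro b _
    split <;> simp
  rw [Finset.sum_congr rfl h1, Finset.sum_ite_eq' Δ a (fun b => (2:ℤ) • b), if_pos ha]

variable [Module.Free ℤ VZ]

lemma a_apply_rho {Δ : Finset (VZ →ₗ[ℤ] ℤ)} (hΔ : IsBase S.Φ Δ) {a : VZ →ₗ[ℤ] ℤ}
    (ha : a ∈ Δ) : 0 < a (∑ γ ∈ PosRoots S.Φ Δ, S.co γ) := by
  have haΦ : a ∈ S.Φ := hΔ.1 ha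
  have haPos : a ∈ PosRoots S.Φ Δ := S.base_subset_pos hΔ ha
  rw [map_sum]
  rw [← Finset.sum_filter_add_sum_filter_not (PosRoots S.Φ Δ)
    (fun γ => γ = a ∨ γ = (2:ℤ) • a) (fun γ => a (S.co γ))]
  have hQ : ∑ γ ∈ (PosRoots S.Φ Δ).filter (fun γ => ¬(γ = a ∨ γ = (2:ℤ) • a)),
      a (S.co γ) = 0 := by
    set Q := (PosRoots S.Φ Δ).filter (fun γ => ¬(γ = a ∨ γ = (2:ℤ) • a)) with hQdef
    have hmem : ∀ γ ∈ Q, dAct (S.r a) γ ∈ Q := by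
      intro γ hγ
      obtain ⟨hγPos, hγne⟩ := Finset.mem_filter.mp hγ
      push_neg at hγne
      have h1 : dAct (S.r a) γ ∈ PosRoots S.Φ Δ :=
        S.pos_reflect hΔ ha hγPos hγne.1 hγne.2
      refine Finset.mem_filter.mpr ⟨h1, ?_⟩
      push_neg
      constructor
      · intro hcon
        have h2 : γ = -a := by
          have h3 : dAct (S.r a) (dAct (S.r a) γ) = γ := by
            rw [← dAct_mul, S.r_mul_r haΦ, dAct_one]
          rw [hcon, S.dAct_r_self haΦ] at h3
          exact h3.symm
        rw [h2] at hγPos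
        exact absurd hγPos (fun hc => S.not_pos_neg hΔ haPos hc)
      · intro hcon
        have h2 : γ = -((2:ℤ) • a) := by
          have h3 : dAct (S.r a) (dAct (S.r a) γ) = γ := by
            rw [← dAct_mul, S.r_mul_r haΦ, dAct_one]
          rw [hcon, dAct_zsmul, S.dAct_r_self haΦ] at h3
          rw [← h3]
          module
        have h2aΦ : (2:ℤ) • a ∈ S.Φ := by
          have : -γ ∈ S.Φ := S.neg_mem_Φ (S.posRoots_subset hγPos)
          rwa [h2, neg_neg] at this
        have h4 : (2:ℤ) • a ∈ PosRoots S.Φ Δ := S.two_smul_mem_pos ha h2aΦ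
        rw [h2] at hγPos
        exact S.not_pos_neg hΔ h4 hγPos
    have hinv : ∀ γ ∈ Q, dAct (S.r a) (dAct (S.r a) γ) = γ := by
      intro γ _
      rw [← dAct_mul, S.r_mul_r haΦ, dAct_one]
    have hneg : ∀ γ ∈ Q, a (S.co (dAct (S.r a) γ)) = -(a (S.co γ)) := by
      intro γ hγ
      have hγΦ : γ ∈ S.Φ := S.posRoots_subset (Finset.mem_filter.mp hγ).1
      rw [S.co_dAct (S.r_mem_W haΦ) hγΦ, S.r_apply haΦ]
      simp only [map_sub, map_zsmul, S.h2 a haΦ, smul_eq_mul]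
      ring
    have hflip : ∑ γ ∈ Q, a (S.co γ) = ∑ γ ∈ Q, -(a (S.co γ)) := by
      refine Finset.sum_nbij' (i := fun γ => dAct (S.r a) γ) (j := fun γ => dAct (S.r a) γ)
        hmem hmem hinv hinv ?_
      intro γ hγ
      show a (S.co γ) = -(a (S.co (dAct (S.r a) γ)))
      rw [hneg γ hγ, neg_neg]
    rw [Finset.sum_neg_distrib] at hflip
    omega
  rw [hQ, add_zero]
  apply Finset.sum_pos
  · intro γ hγ
    obtain ⟨hγPos, hγeq⟩ := Finset.mem_filter.mp hγ
    rcases hγeq with h | h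
    · rw [h, S.h2 a haΦ]; norm_num
    · rw [h] at hγPos ⊢
      have h2aΦ : (2:ℤ) • a ∈ S.Φ := S.posRoots_subset hγPos
      have hco := S.co_two haΦ h2aΦ
      have h22 : a (S.co a) = 2 := S.h2 a haΦ
      rw [hco] at h22
      simp only [map_zsmul, smul_eq_mul] at h22
      omega
  · exact ⟨a, Finset.mem_filter.mpr ⟨haPos, Or.inl rfl⟩⟩

lemma pos_apply_rho {Δ : Finset (VZ →ₗ[ℤ] ℤ)} (hΔ : IsBase S.Φ Δ) {β : VZ →ₗ[ℤ] ℤ}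
    (hβ : β ∈ PosRoots S.Φ Δ) : 0 < β (∑ γ ∈ PosRoots S.Φ Δ, S.co γ) := by
  obtain ⟨hβΦ, c, hc⟩ := S.mem_posRoots.mp hβ
  set z := ∑ γ ∈ PosRoots S.Φ Δ, S.co γ with hz
  have h1 : β z = ∑ a ∈ Δ, (c a : ℤ) * (a z) := by
    rw [hc]
    simp [LinearMap.sum_apply, LinearMap.smul_apply, smul_eq_mul]
  have hex : ∃ a ∈ Δ, c a ≠ 0 := by
    by_contra hall
    push_neg at hall
    have : β = 0 := by
      rw [hc]
      apply Finset.sum_eq_zero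
      intro a ha
      rw [hall a ha]
      simp
    exact S.h0 (this ▸ hβΦ)
  obtain ⟨a, ha, hca⟩ := hex
  rw [h1]
  refine Finset.sum_pos' (fun b hb => ?_) ⟨a, ha, ?_⟩
  · exact mul_nonneg (Int.natCast_nonneg _) (le_of_lt (S.a_apply_rho hΔ hb))
  · exact mul_pos (by exact_mod_cast Nat.pos_of_ne_zero hca) (S.a_apply_rho hΔ ha)

end RS
section Rside
variable {VZ : Type*} [AddCommGroup VZ] {R : Type*} [AddCommGroup R] [LinearOrder R] [IsOrderedAddMonoid R]

lemma rootR_tmul (α : VZ →ₗ[ℤ] ℤ) (v : VZ) (t : R) :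
    rootR R α (v ⊗ₜ[ℤ] t) = α v • t := by
  show (TensorProduct.lid ℤ R) (LinearMap.rTensor R α (v ⊗ₜ[ℤ] t)) = _
  rw [LinearMap.rTensor_tmul, TensorProduct.lid_tmul]

lemma rootR_add_left (α β : VZ →ₗ[ℤ] ℤ) (u : VZ ⊗[ℤ] R) :
    rootR R (α + β) u = rootR R α u + rootR R β u := by
  show (TensorProduct.lid ℤ R) (LinearMap.rTensor R (α + β) u) = (TensorProduct.lid ℤ R) (LinearMap.rTensor R α u) + (TensorProduct.lid ℤ R) (LinearMap.rTensor R β u)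
  rw [LinearMap.rTensor_add, LinearMap.add_apply, map_add]

lemma rootR_zero_left (u : VZ ⊗[ℤ] R) : rootR R (0 : VZ →ₗ[ℤ] ℤ) u = 0 := by
  show (TensorProduct.lid ℤ R) (LinearMap.rTensor R (0 : VZ →ₗ[ℤ] ℤ) u) = 0
  rw [LinearMap.rTensor_zero, LinearMap.zero_apply, map_zero]

/-- evaluation at a point of `V_R` as an additive map in the root -/
noncomputable def evalR (u : VZ ⊗[ℤ] R) : (VZ →ₗ[ℤ] ℤ) →+ R where
  toFun := fun β => rootR R β u
  map_zero' := rootR_zero_left u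
  map_add' := fun a b => rootR_add_left a b u

lemma lex_pos_iff {r : R} {n : ℤ} :
    (0 : Lex (R × ℤ)) < toLex ((r, n) : R × ℤ) ↔ 0 < r ∨ (r = 0 ∧ 0 < n) := by
  have h : (0 : Lex (R × ℤ)) = toLex ((0 : R), (0 : ℤ)) := rfl
  rw [h, Prod.Lex.lt_iff]
  simp [eq_comm]

/-- the lexicographic functional -/
noncomputable def Lhom (x : VZ ⊗[ℤ] R) (z : VZ) : (VZ →ₗ[ℤ] ℤ) →+ Lex (R × ℤ) where
  toFun := fun β => toLex (rootR R β x, β z)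
  map_zero' := by
    show toLex ((rootR R (0 : VZ →ₗ[ℤ] ℤ) x, (0 : VZ →ₗ[ℤ] ℤ) z) : R × ℤ) = 0
    rw [rootR_zero_left]
    rfl
  map_add' := fun a b => by
    show toLex ((rootR R (a + b) x, (a + b) z) : R × ℤ)
        = toLex ((rootR R a x, a z) : R × ℤ) + toLex ((rootR R b x, b z) : R × ℤ)
    have h1 : toLex ((rootR R a x, a z) : R × ℤ) + toLex ((rootR R b x, b z) : R × ℤ)
        = toLex ((rootR R a x + rootR R b x, a z + b z) : R × ℤ) := rfl
    rw [h1, ← rootR_add_left]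
    rfl

lemma pos_root_chamber (S : RS VZ) {Δ' : Finset (VZ →ₗ[ℤ] ℤ)} (hΔ' : IsBase S.Φ Δ')
    {β : VZ →ₗ[ℤ] ℤ} (hβ : β ∈ PosRoots S.Φ Δ') {v : VZ ⊗[ℤ] R}
    (hv : v ∈ chamberR R Δ') : 0 < rootR R β v := by
  obtain ⟨hβΦ, c, hc⟩ := S.mem_posRoots.mp hβ
  have h1 : rootR R β v = ∑ a ∈ Δ', (c a) • rootR R a v := by
    have h2 : rootR R β v = evalR v β := rfl
    rw [h2, hc, map_sum]
    refine Finset.sum_congr rfl fun a _ => ?_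
    rw [map_zsmul, natCast_zsmul]
    rfl
  have hex : ∃ a ∈ Δ', c a ≠ 0 := by
    by_contra hall
    push_neg at hall
    have : β = 0 := by
      rw [hc]
      apply Finset.sum_eq_zero
      intro a ha
      rw [hall a ha]
      simp
    exact S.h0 (this ▸ hβΦ)
  obtain ⟨a, ha, hca⟩ := hex
  rw [h1]
  refine Finset.sum_pos' (fun b hb => nsmul_nonneg (le_of_lt (hv b hb)) _) ⟨a, ha, ?_⟩
  exact nsmul_pos (hv a ha) hca

end Rside

theorem statement8' {VZ : Type*} [AddCommGroup VZ] [Module.Free ℤ VZ]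
    {R : Type*} [AddCommGroup R] [LinearOrder R] [IsOrderedAddMonoid R] [Nontrivial R]
    (hdiv : ∀ k : ℤ, k ≠ 0 → ∀ r : R, ∃ s : R, k • s = r)
    (Φ : Finset (VZ →ₗ[ℤ] ℤ)) (coroot : (VZ →ₗ[ℤ] ℤ) → VZ)
    (h0 : (0 : VZ →ₗ[ℤ] ℤ) ∉ Φ)
    (h2 : ∀ α ∈ Φ, α (coroot α) = 2)
    (hrefl : ∀ α ∈ Φ, ∀ β ∈ Φ, β - β (coroot α) • α ∈ Φ)
    (hcorefl : ∀ α ∈ Φ, ∀ β ∈ Φ,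
      coroot (β - β (coroot α) • α) = coroot β - α (coroot β) • coroot α)
    (x : VZ ⊗[ℤ] R)
    (Δ Δ' : Finset (VZ →ₗ[ℤ] ℤ)) (hΔ : IsBase Φ Δ) (hΔ' : IsBase Φ Δ') :
    ∃ w : VZ ≃ₗ[ℤ] VZ, w ∈ Weyl Φ coroot ∧
      (x ∈ closedChamberR R (Δ.image (dAct w)) ∧
        (chamberR R (Δ.image (dAct w)) ∩ {y : VZ ⊗[ℤ] R | y - x ∈ chamberR R Δ'}).Nonempty) ∧
      ∀ w' : VZ ≃ₗ[ℤ] VZ, w' ∈ Weyl Φ coroot →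
        (x ∈ closedChamberR R (Δ.image (dAct w')) ∧
          (chamberR R (Δ.image (dAct w')) ∩
            {y : VZ ⊗[ℤ] R | y - x ∈ chamberR R Δ'}).Nonempty) →
        w' = w := by
  classical
  set S : RS VZ := ⟨Φ, coroot, h0, h2, hrefl, hcorefl⟩ with hSdef
  set z : VZ := ∑ γ ∈ PosRoots Φ Δ', S.co γ with hzdef
  set L : (VZ →ₗ[ℤ] ℤ) →+ Lex (R × ℤ) := Lhom x z with hLdef
  have hLapp : ∀ β, L β = toLex ((rootR R β x, β z) : R × ℤ) := fun β => rfl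
  have hF2 : ∀ β ∈ PosRoots Φ Δ', 0 < β z := fun β hβ => S.pos_apply_rho hΔ' hβ
  have hF3 : ∀ β ∈ Φ, β ∉ PosRoots Φ Δ' → β z < 0 := by
    intro β hβ hneg
    rcases S.pos_or_neg hΔ' hβ with h | h
    · exact absurd h hneg
    · have h1 := hF2 _ h
      rw [LinearMap.neg_apply] at h1
      omega
  have hL0 : ∀ β ∈ S.Φ, L β ≠ 0 := by
    intro β hβ hcon
    have h2' : β z = 0 := congrArg (fun p => (ofLex p).2) hcon
    by_cases hp : β ∈ PosRoots Φ Δ'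
    · have := hF2 β hp; omega
    · have := hF3 β hβ hp; omega
  obtain ⟨w, hwW, hwpos, huniq⟩ := S.abstract_main hΔ L hL0
  -- condition 1
  have cond1 : ∀ w₀ : VZ ≃ₗ[ℤ] VZ, (∀ a ∈ Δ, 0 < L (dAct w₀ a)) →
      x ∈ closedChamberR R (Δ.image (dAct w₀)) := by
    intro w₀ hw₀
    show ∀ α ∈ Δ.image (dAct w₀), 0 ≤ rootR R α x
    intro α hα
    obtain ⟨a, ha, rfl⟩ := Finset.mem_image.mp hα
    have h1 := hw₀ a ha
    rw [hLapp] at h1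
    rcases lex_pos_iff.mp h1 with h | h
    · exact le_of_lt h
    · exact le_of_eq h.1.symm
  -- condition 2 : construct the point y
  set N : ℕ := 1 + ∑ β ∈ Φ, ((β z).natAbs) with hNdef
  have hNb : ∀ β ∈ Φ, -((N:ℤ) - 1) ≤ β z := by
    intro β hβ
    have h1 : (β z).natAbs ≤ ∑ β ∈ Φ, ((β z).natAbs) :=
      Finset.single_le_sum (f := fun β => (β z).natAbs) (fun _ _ => Nat.zero_le _) hβ
    have h2' : ((β z).natAbs : ℤ) ≤ ((∑ β ∈ Φ, ((β z).natAbs) : ℕ) : ℤ) := by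
      exact_mod_cast h1
    have h3 : ((N:ℤ)) = 1 + ((∑ β ∈ Φ, ((β z).natAbs) : ℕ) : ℤ) := by
      rw [hNdef]; push_cast; ring
    omega
  obtain ⟨r1, hr1⟩ := exists_ne (0 : R)
  have hr₀ : 0 < |r1| := abs_pos.mpr hr1
  set P : Finset R := (Δ.filter fun a => 0 < rootR R (dAct w a) x).image
    fun a => rootR R (dAct w a) x with hPdef
  set I : Finset R := insert |r1| P with hIdef
  have hIne : I.Nonempty := ⟨|r1|, Finset.mem_insert_self _ _⟩
  set m : R := I.min' hIne with hmdef
  have hm0 : 0 < m := by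
    have hmem := I.min'_mem hIne
    rcases Finset.mem_insert.mp hmem with h | h
    · rw [hmdef] at *; rw [h]; exact hr₀
    · obtain ⟨a, haf, heq⟩ := Finset.mem_image.mp h
      have := (Finset.mem_filter.mp haf).2
      rw [hmdef, ← heq] at *
      exact this
  have hmle : ∀ a ∈ Δ, 0 < rootR R (dAct w a) x → m ≤ rootR R (dAct w a) x := by
    intro a ha hpos
    exact Finset.min'_le _ _ (Finset.mem_insert_of_mem
      (Finset.mem_image_of_mem _ (Finset.mem_filter.mpr ⟨ha, hpos⟩)))
  have hN0 : ((N:ℤ)) ≠ 0 := by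
    have : 1 ≤ N := by rw [hNdef]; omega
    exact_mod_cast Nat.one_le_iff_ne_zero.mp this
  obtain ⟨ε, hε⟩ := hdiv (N:ℤ) hN0 m
  have hε0 : 0 < ε := by
    by_contra hcon
    push_neg at hcon
    have h1 : (N:ℤ) • ε ≤ (N:ℤ) • (0:R) :=
      zsmul_le_zsmul_right (by positivity) hcon
    rw [smul_zero, hε] at h1
    exact absurd hm0 (not_lt.mpr h1)
  set u0 : VZ ⊗[ℤ] R := z ⊗ₜ[ℤ] ε with hu0def
  have hu0 : ∀ β : VZ →ₗ[ℤ] ℤ, rootR R β u0 = β z • ε := fun β => rootR_tmul β z ε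
  have hchΔ' : u0 ∈ chamberR R Δ' := by
    show ∀ α ∈ Δ', 0 < rootR R α u0
    intro a ha
    rw [hu0]
    exact zsmul_pos hε0 (S.a_apply_rho hΔ' ha)
  have hy : x + u0 ∈ chamberR R (Δ.image (dAct w)) := by
    show ∀ α ∈ Δ.image (dAct w), 0 < rootR R α (x + u0)
    intro α hα
    obtain ⟨a, ha, rfl⟩ := Finset.mem_image.mp hα
    have hβΦ : dAct w a ∈ Φ := S.dAct_mem_Φ hwW (hΔ.1 ha)
    have hroot : rootR R (dAct w a) (x + u0)
        = rootR R (dAct w a) x + (dAct w a) z • ε := by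
      rw [map_add, hu0]
    have h1 := hwpos a ha
    rw [hLapp] at h1
    rcases lex_pos_iff.mp h1 with hpos | ⟨heq, hz2⟩
    · have hb1 : -((N:ℤ) - 1) ≤ (dAct w a) z := hNb _ hβΦ
      have hb2 : (-((N:ℤ) - 1)) • ε ≤ ((dAct w a) z) • ε :=
        zsmul_le_zsmul_left (le_of_lt hε0) hb1
      have hb3 : m ≤ rootR R (dAct w a) x := hmle a ha hpos
      rw [hroot]
      have hsc : (N:ℤ) + (-((N:ℤ) - 1)) = 1 := by ring
      calc (0:R) < ε := hε0
        _ = ((N:ℤ) + (-((N:ℤ) - 1))) • ε := by rw [hsc, one_zsmul]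
        _ = (N:ℤ) • ε + (-((N:ℤ) - 1)) • ε := add_zsmul _ _ _
        _ = m + (-((N:ℤ) - 1)) • ε := by rw [hε]
        _ ≤ rootR R (dAct w a) x + ((dAct w a) z) • ε := add_le_add hb3 hb2
    · rw [hroot, heq, zero_add]
      exact zsmul_pos hε0 hz2
  have cond2 : (chamberR R (Δ.image (dAct w)) ∩
      {y : VZ ⊗[ℤ] R | y - x ∈ chamberR R Δ'}).Nonempty := by
    refine ⟨x + u0, hy, ?_⟩
    show x + u0 - x ∈ chamberR R Δ'
    rw [add_sub_cancel_left]
    exact hchΔ'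
  refine ⟨w, hwW, ⟨cond1 w hwpos, cond2⟩, ?_⟩
  -- uniqueness
  rintro w' hw'W ⟨hc1, y₀, hy₀ch, hy₀f⟩
  refine huniq w' hw'W ?_
  intro a ha
  have hβΦ : dAct w' a ∈ Φ := S.dAct_mem_Φ hw'W (hΔ.1 ha)
  have h0le : 0 ≤ rootR R (dAct w' a) x := hc1 _ (Finset.mem_image_of_mem _ ha)
  rw [hLapp]
  apply lex_pos_iff.mpr
  rcases h0le.lt_or_eq with hlt | heq0
  · exact Or.inl hlt
  · refine Or.inr ⟨heq0.symm, ?_⟩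
    by_contra hcon
    push_neg at hcon
    have hβnot : dAct w' a ∉ PosRoots Φ Δ' := fun h => absurd (hF2 _ h) (by omega)
    have hneg : -(dAct w' a) ∈ PosRoots Φ Δ' :=
      (S.pos_or_neg hΔ' hβΦ).resolve_left hβnot
    have hch : y₀ - x ∈ chamberR R Δ' := hy₀f
    have hp1 : 0 < rootR R (-(dAct w' a)) (y₀ - x) := pos_root_chamber S hΔ' hneg hch
    have hp2 : 0 < rootR R (dAct w' a) y₀ := hy₀ch _ (Finset.mem_image_of_mem _ ha)
    have hcalc : rootR R (-(dAct w' a)) (y₀ - x) = -(rootR R (dAct w' a) y₀) := by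
      have e1 : rootR R (-(dAct w' a)) (y₀ - x) = -(rootR R (dAct w' a) (y₀ - x)) := by
        have := (evalR (R := R) (y₀ - x)).map_neg (dAct w' a)
        exact this
      rw [e1, map_sub, ← heq0, sub_zero]
    rw [hcalc] at hp1
    exact lt_asymm hp2 (neg_pos.mp hp1)

/-- **Statement 8.** If `R` is divisible, then for every `x ∈ V_R` and all bases `Δ, Δ'`
of `Φ` there is a unique `w ∈ W(Φ)` with `x ∈ C̄^v_{R,w(Δ)}` and
`C^v_{R,w(Δ)} ∩ (x + C^v_{R,Δ'}) ≠ ∅`. -/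
theorem statement8 {VZ : Type*} [AddCommGroup VZ] [Module.Free ℤ VZ]
    {R : Type*} [AddCommGroup R] [LinearOrder R] [IsOrderedAddMonoid R] [Nontrivial R]
    (hdiv : ∀ k : ℤ, k ≠ 0 → ∀ r : R, ∃ s : R, k • s = r)
    (Φ : Finset (VZ →ₗ[ℤ] ℤ)) (coroot : (VZ →ₗ[ℤ] ℤ) → VZ)
    (h0 : (0 : VZ →ₗ[ℤ] ℤ) ∉ Φ)
    (h2 : ∀ α ∈ Φ, α (coroot α) = 2)
    (hrefl : ∀ α ∈ Φ, ∀ β ∈ Φ, β - β (coroot α) • α ∈ Φ)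
    (hcorefl : ∀ α ∈ Φ, ∀ β ∈ Φ,
      coroot (β - β (coroot α) • α) = coroot β - α (coroot β) • coroot α)
    (hspan : Submodule.span ℤ (coroot '' (Φ : Set (VZ →ₗ[ℤ] ℤ))) = ⊤)
    (hnd : ∀ x : VZ, (∀ α ∈ Φ, α x = 0) → x = 0)
    (x : VZ ⊗[ℤ] R)
    (Δ Δ' : Finset (VZ →ₗ[ℤ] ℤ)) (hΔ : IsBase Φ Δ) (hΔ' : IsBase Φ Δ') :
    ∃ w : VZ ≃ₗ[ℤ] VZ, w ∈ Weyl Φ coroot ∧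
      (x ∈ closedChamberR R (Δ.image (dAct w)) ∧
        (chamberR R (Δ.image (dAct w)) ∩ {y : VZ ⊗[ℤ] R | y - x ∈ chamberR R Δ'}).Nonempty) ∧
      ∀ w' : VZ ≃ₗ[ℤ] VZ, w' ∈ Weyl Φ coroot →
        (x ∈ closedChamberR R (Δ.image (dAct w')) ∧
          (chamberR R (Δ.image (dAct w')) ∩
            {y : VZ ⊗[ℤ] R | y - x ∈ chamberR R Δ'}).Nonempty) →
        w' = w := by
  exact statement8' hdiv Φ coroot h0 h2 hrefl hcorefl x Δ Δ' hΔ hΔ'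
end

section
/- The following are equivalent: (i) L^u_max ≠ ∅ for every u ∈ K^×; (ii) L^1_max ≠ ∅. Moreover, if these conditions hold, then for every u ∈ K^×, ω(L^u_max) = ω(L^1_max) + ω(u) as subsets of Λ'. -/
section QuadSetup

variable {K L Λ' : Type*} [Field K] [Field L] [Algebra K L] [AddCommGroup Λ'] [LinearOrder Λ']
    [IsOrderedAddMonoid Λ']

/-- `L^u_max`: the set of `y ∈ L` of trace `u ∈ K` at which `z ↦ ω(y + z)`, `z ∈ L⁰`,
attains its maximum at `z = 0`. -/
def Lmax (τ : L ≃ₐ[K] L) (ω : AddValuation L (WithTop Λ')) (u : K) : Set L :=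
  {y : L | y + τ y = algebraMap K L u ∧ ∀ z : L, z + τ z = 0 → ω (y + z) ≤ ω y}

/-- `ω(L^×)` as a set of values. -/
def wLx (ω : AddValuation L (WithTop Λ')) : Set (WithTop Λ') :=
  {c | ∃ y : L, y ≠ 0 ∧ ω y = c}

/-- `ω(K^×)` as a set of values. -/
def wKx (K : Type*) [Field K] [Algebra K L] (ω : AddValuation L (WithTop Λ')) :
    Set (WithTop Λ') :=
  {c | ∃ u : K, u ≠ 0 ∧ ω (algebraMap K L u) = c}

/-- `ω(L⁰ ∖ {0})` as a set of values. -/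
def wL0 (τ : L ≃ₐ[K] L) (ω : AddValuation L (WithTop Λ')) : Set (WithTop Λ') :=
  {c | ∃ z : L, z ≠ 0 ∧ z + τ z = 0 ∧ ω z = c}

/-- `S = {ω(v) : (u, v) ∈ H, v ≠ 0}`, where `H = {(u,v) : u·τ(u) = v + τ(v)}`. -/
def SH (τ : L ≃ₐ[K] L) (ω : AddValuation L (WithTop Λ')) : Set (WithTop Λ') :=
  {c | ∃ u v : L, u * τ u = v + τ v ∧ v ≠ 0 ∧ ω v = c}

/-- `ω(N(L^×))` as a set of values. -/
def wN (τ : L ≃ₐ[K] L) (ω : AddValuation L (WithTop Λ')) : Set (WithTop Λ') :=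
  {c | ∃ z : L, z ≠ 0 ∧ ω (z * τ z) = c}

end QuadSetup


private lemma lmax_scale {K L Λ' : Type*} [Field K] [Field L] [Algebra K L]
    [AddCommGroup Λ'] [LinearOrder Λ'] [IsOrderedAddMonoid Λ']
    (τ : L ≃ₐ[K] L) (ω : AddValuation L (WithTop Λ'))
    (c u : K) (hc : c ≠ 0) {y : L} (hy : y ∈ Lmax τ ω u) :
    algebraMap K L c * y ∈ Lmax τ ω (c * u) := by
  obtain ⟨h1, h2⟩ := hy
  have hcL : (algebraMap K L c) ≠ 0 := by
    simpa using (map_ne_zero (algebraMap K L)).mpr hc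
  constructor
  · rw [map_mul, τ.commutes, ← mul_add, h1, map_mul]
  · intro z hz
    set z' : L := (algebraMap K L c)⁻¹ * z with hz'
    have hzz : algebraMap K L c * z' = z := by
      rw [hz', mul_inv_cancel_left₀ hcL]
    have hz'0 : z' + τ z' = 0 := by
      have : τ z' = (algebraMap K L c)⁻¹ * τ z := by
        rw [hz', map_mul, map_inv₀, τ.commutes]
      rw [this, ← mul_add, hz, mul_zero]
    calc ω (algebraMap K L c * y + z)
        = ω (algebraMap K L c * (y + z')) := by rw [mul_add, hzz]
      _ = ω (algebraMap K L c) + ω (y + z') := ω.map_mul _ _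
      _ ≤ ω (algebraMap K L c) + ω y := add_le_add_right (h2 z' hz'0) _
      _ = ω (algebraMap K L c * y) := (ω.map_mul _ _).symm

/-- **Statement 13.** `L^u_max ≠ ∅` for all `u ∈ K^×` iff `L^1_max ≠ ∅`; and in that
case `ω(L^u_max) = ω(L^1_max) + ω(u)` for every `u ∈ K^×`. -/
theorem statement13 {K L Λ' : Type*} [Field K] [Field L] [Algebra K L]
    [AddCommGroup Λ'] [LinearOrder Λ'] [IsOrderedAddMonoid Λ']
    (τ : L ≃ₐ[K] L) (hτ2 : ∀ x : L, τ (τ x) = x) (hτne : ∃ x : L, τ x ≠ x)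
    (hfix : ∀ x : L, τ x = x ↔ ∃ k : K, algebraMap K L k = x)
    (hrank : Module.finrank K L = 2)
    (ω : AddValuation L (WithTop Λ')) (hωτ : ∀ x : L, ω (τ x) = ω x)
    :
    ((∀ u : K, u ≠ 0 → (Lmax τ ω u).Nonempty) ↔ (Lmax τ ω (1 : K)).Nonempty) ∧
    ((Lmax τ ω (1 : K)).Nonempty → ∀ u : K, u ≠ 0 →
      {c : WithTop Λ' | ∃ y ∈ Lmax τ ω u, ω y = c} =
        (fun c => c + ω (algebraMap K L u)) ''
          {c : WithTop Λ' | ∃ y ∈ Lmax τ ω (1 : K), ω y = c}) := by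
  have key : ∀ (u : K), u ≠ 0 → ∀ y ∈ Lmax τ ω 1, algebraMap K L u * y ∈ Lmax τ ω u := by
    intro u hu y hy
    simpa using lmax_scale τ ω u 1 hu hy
  constructor
  · constructor
    · intro h; exact h 1 one_ne_zero
    · rintro ⟨y, hy⟩ u hu
      exact ⟨algebraMap K L u * y, key u hu y hy⟩
  · rintro ⟨y1, hy1⟩ u hu
    ext cv
    constructor
    · rintro ⟨y, hy, rfl⟩
      set y' : L := (algebraMap K L u)⁻¹ * y with hy'
      have hy'mem : y' ∈ Lmax τ ω 1 := by
        have := lmax_scale τ ω u⁻¹ u (inv_ne_zero hu) hy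
        rw [inv_mul_cancel₀ hu] at this
        simpa [hy', map_inv₀] using this
      refine ⟨ω y', ⟨y', hy'mem, rfl⟩, ?_⟩
      have huL : (algebraMap K L u) ≠ 0 := by
        simpa using (map_ne_zero (algebraMap K L)).mpr hu
      have : algebraMap K L u * y' = y := by rw [hy', mul_inv_cancel_left₀ huL]
      exact (by rw [← ω.map_mul, mul_comm, this] : ω y' + ω (algebraMap K L u) = ω y)
    · rintro ⟨c, ⟨y', hy', rfl⟩, rfl⟩
      exact ⟨algebraMap K L u * y', key u hu y' hy', by rw [ω.map_mul, add_comm]⟩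
end

section
/- Assume L¹_max = ∅. Then: (a) for every (u, v) ∈ H with v ≠ 0, there exists z ∈ L⁰ with ω(v + z) > ω(v); (b) S = ω(L⁰ ∖ {0}). -/
/-- Assume `L¹_max = ∅`. Then (a) for every `(u, v) ∈ H` with `v ≠ 0`
there is `z ∈ L⁰` with `ω(v + z) > ω(v)`; and (b) `S = ω(L⁰ ∖ {0})`. -/
theorem statement16 {K L Λ' : Type*} [Field K] [Field L] [Algebra K L]
    [AddCommGroup Λ'] [LinearOrder Λ'] [IsOrderedAddMonoid Λ']
    (τ : L ≃ₐ[K] L) (hτ2 : ∀ x : L, τ (τ x) = x) (hτne : ∃ x : L, τ x ≠ x)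
    (hfix : ∀ x : L, τ x = x ↔ ∃ k : K, algebraMap K L k = x)
    (hrank : Module.finrank K L = 2)
    (ω : AddValuation L (WithTop Λ')) (hωτ : ∀ x : L, ω (τ x) = ω x)
    (hempty : Lmax τ ω (1 : K) = ∅) :
    (∀ u v : L, u * τ u = v + τ v → v ≠ 0 →
      ∃ z : L, z + τ z = 0 ∧ ω v < ω (v + z)) ∧
    SH τ ω = wL0 τ ω := by
  have hne_top : ∀ x : L, x ≠ 0 → ω x ≠ ⊤ := fun x hx => ω.ne_top_iff.mpr hx
  have hneg : ∀ x : L, ω (-x) = ω x := fun x => Valuation.map_neg ω x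
  have partA : ∀ u v : L, u * τ u = v + τ v → v ≠ 0 →
      ∃ z : L, z + τ z = 0 ∧ ω v < ω (v + z) := by
    intro u v huv hv
    by_cases hu : u = 0
    · refine ⟨-v, ?_, ?_⟩
      · have h0 : v + τ v = 0 := by rw [← huv, hu]; ring
        rw [map_neg]
        have : -v + -τ v = -(v + τ v) := by ring
        rw [this, h0, neg_zero]
      · rw [add_neg_cancel, ω.map_zero]
        exact lt_of_le_of_ne le_top (hne_top v hv)
    · set N := u * τ u with hN
      have hNfix : τ N = N := by rw [hN, map_mul, hτ2, mul_comm]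
      have huτ : τ u ≠ 0 := fun h => hu (by simpa [h] using (hτ2 u).symm)
      have hNne : N ≠ 0 := mul_ne_zero hu huτ
      set y := v * N⁻¹ with hy
      have hτy : τ y = τ v * N⁻¹ := by rw [hy, map_mul, map_inv₀, hNfix]
      have hy1 : y + τ y = algebraMap K L 1 := by
        rw [map_one, hy, hτy, ← add_mul, ← huv, mul_inv_cancel₀ hNne]
      have hyn : y ∉ Lmax τ ω (1 : K) := by rw [hempty]; exact Set.notMem_empty y
      rw [Lmax, Set.mem_setOf_eq, not_and] at hyn
      have h2 := hyn hy1
      push_neg at h2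
      obtain ⟨z₀, hz₀, hlt⟩ := h2
      refine ⟨N * z₀, ?_, ?_⟩
      · rw [map_mul, hNfix, ← mul_add, hz₀, mul_zero]
      · have hvy : v = N * y := by rw [hy]; field_simp
        have h1 : v + N * z₀ = N * (y + z₀) := by rw [hvy]; ring
        rw [h1, hvy, ω.map_mul N y, ω.map_mul N (y + z₀)]
        exact WithTop.add_lt_add_left (hne_top N hNne) hlt
  refine ⟨partA, ?_⟩
  ext c
  constructor
  · rintro ⟨u, v, huv, hv, rfl⟩
    obtain ⟨z, hz0, hlt⟩ := partA u v huv hv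
    have hzne : z ≠ 0 := by
      rintro rfl
      simp only [add_zero] at hlt
      exact lt_irrefl _ hlt
    refine ⟨z, hzne, hz0, le_antisymm ?_ ?_⟩
    · -- ω z ≤ ω v : v = (v+z) + (-z)
      have h3 : min (ω (v + z)) (ω (-z)) ≤ ω ((v + z) + -z) := ω.map_add _ _
      rw [show (v + z) + -z = v by ring, hneg] at h3
      by_contra h
      push_neg at h
      exact absurd h3 (not_le.mpr (lt_min hlt h))
    · -- ω v ≤ ω z : z = (v+z) + (-v)
      have h3 : min (ω (v + z)) (ω (-v)) ≤ ω ((v + z) + -v) := ω.map_add _ _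
      rw [show (v + z) + -v = z by ring, hneg] at h3
      exact le_trans (le_min hlt.le le_rfl) h3
  · rintro ⟨z, hz, hz0, rfl⟩
    exact ⟨0, z, by simp [hz0], hz, rfl⟩
end

section
/- Let x ∈ L¹_max (in particular L¹_max ≠ ∅). Then S = ω(L⁰ ∖ {0}) ∪ (ω(x) + ω(N(L^×))), and the subset of maximal values {ω(v) : (u, v) ∈ H, v ≠ 0, and ω(v) ≥ ω(v + z) for every z ∈ L⁰} equals ω(x) + ω(N(L^×)). -/
/-- If `x ∈ L¹_max` (so `L¹_max ≠ ∅`), then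
`S = ω(L⁰ ∖ {0}) ∪ (ω(x) + ω(N(L^×)))`, and the subset of maximal values of `S`
equals `ω(x) + ω(N(L^×))`. -/
theorem statement17 {K L Λ' : Type*} [Field K] [Field L] [Algebra K L]
    [AddCommGroup Λ'] [LinearOrder Λ'] [IsOrderedAddMonoid Λ']
    (τ : L ≃ₐ[K] L) (hτ2 : ∀ x : L, τ (τ x) = x) (hτne : ∃ x : L, τ x ≠ x)
    (hfix : ∀ x : L, τ x = x ↔ ∃ k : K, algebraMap K L k = x)
    (hrank : Module.finrank K L = 2)
    (ω : AddValuation L (WithTop Λ')) (hωτ : ∀ x : L, ω (τ x) = ω x)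
    (x : L) (hx : x ∈ Lmax τ ω (1 : K)) :
    SH τ ω = wL0 τ ω ∪ (fun c => ω x + c) '' wN τ ω ∧
    {c : WithTop Λ' | ∃ u v : L, u * τ u = v + τ v ∧ v ≠ 0 ∧
        (∀ z : L, z + τ z = 0 → ω (v + z) ≤ ω v) ∧ ω v = c} =
      (fun c => ω x + c) '' wN τ ω := by
  obtain ⟨hxT, hxmax⟩ := hx
  rw [map_one] at hxT
  have hxne : x ≠ 0 := fun h => one_ne_zero (by rw [h, map_zero, add_zero] at hxT; exact hxT.symm)
  have hτx : τ x = 1 - x := by linear_combination hxT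
  have key : ∀ k z : L, τ k = k → k ≠ 0 → z + τ z = 0 → ω (k * x + z) ≤ ω (k * x) := by
    intro k z hk hk0 hz
    have hτz : τ z = -z := by linear_combination hz
    have hz' : z / k + τ (z / k) = 0 := by
      rw [map_div₀, hk, hτz]; ring
    have hkx : k * x + z = k * (x + z / k) := by field_simp
    rw [hkx, ω.map_mul, ω.map_mul]
    exact add_le_add_right (hxmax _ hz') _
  have trace0 : ∀ u v : L, u * τ u = v + τ v →
      (v - u * τ u * x) + τ (v - u * τ u * x) = 0 := by
    intro u v huv
    have h1 : τ (v - u * τ u * x) = τ v - u * τ u * (1 - x) := by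
      rw [map_sub, map_mul, map_mul, hτ2, hτx, mul_comm (τ u) u]
    rw [h1]; linear_combination -huv
  have Nfix : ∀ u : L, τ (u * τ u) = u * τ u := fun u => by
    rw [map_mul, hτ2, mul_comm]
  have Nne : ∀ u : L, u ≠ 0 → u * τ u ≠ 0 := by
    intro u hu
    have hτu : τ u ≠ 0 := fun h => hu (by have := congrArg τ h; rwa [hτ2, map_zero] at this)
    exact mul_ne_zero hu hτu
  have memH : ∀ z : L, z * τ z = x * (z * τ z) + τ (x * (z * τ z)) := by
    intro z
    rw [map_mul, Nfix, hτx]; ring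
  constructor
  · ext c
    simp only [SH, wL0, wN, Set.mem_union, Set.mem_image, Set.mem_setOf_eq]
    constructor
    · rintro ⟨u, v, huv, hv, rfl⟩
      by_cases hu : u = 0
      · left
        refine ⟨v, hv, ?_, rfl⟩
        rw [hu, map_zero, zero_mul] at huv
        linear_combination -huv
      · have hk0 : u * τ u ≠ 0 := Nne u hu
        have hzt : (v - u * τ u * x) + τ (v - u * τ u * x) = 0 := trace0 u v huv
        have hle : ω v ≤ ω (u * τ u * x) := by
          conv_lhs => rw [show v = u * τ u * x + (v - u * τ u * x) by ring]
          exact key _ _ (Nfix u) hk0 hzt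
        rcases eq_or_lt_of_le hle with heq | hlt
        · right
          exact ⟨ω (u * τ u), ⟨u, hu, rfl⟩, by rw [heq, ω.map_mul (u * τ u) x, add_comm]⟩
        · left
          refine ⟨v - u * τ u * x, ?_, hzt, ?_⟩
          · intro h
            rw [sub_eq_zero] at h
            rw [h] at hlt; exact lt_irrefl _ hlt
          · have h1 : ω (v - u * τ u * x) = min (ω v) (ω (u * τ u * x)) := by
              rw [sub_eq_add_neg, AddValuation.map_add_of_distinct_val, ω.map_neg]
              rw [ω.map_neg]; exact ne_of_lt hlt
            rw [h1, min_eq_left hlt.le]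
    · rintro (⟨z, hz, hz0, rfl⟩ | ⟨c, ⟨z, hz, rfl⟩, rfl⟩)
      · refine ⟨0, z, ?_, hz, rfl⟩
        rw [map_zero, zero_mul]
        linear_combination -hz0
      · exact ⟨z, x * (z * τ z), memH z, mul_ne_zero hxne (Nne z hz), ω.map_mul _ _⟩
  · ext c
    simp only [wN, Set.mem_image, Set.mem_setOf_eq]
    constructor
    · rintro ⟨u, v, huv, hv, hmax, rfl⟩
      have hu : u ≠ 0 := by
        intro h
        rw [h, map_zero, zero_mul] at huv
        have h2 : (-v) + τ (-v) = 0 := by rw [map_neg]; linear_combination huv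
        have h3 := hmax (-v) h2
        rw [add_neg_cancel, AddValuation.map_zero, top_le_iff] at h3
        exact (ω.ne_top_iff.mpr hv) h3
      have hk0 : u * τ u ≠ 0 := Nne u hu
      have hzt : (v - u * τ u * x) + τ (v - u * τ u * x) = 0 := trace0 u v huv
      have h2 : (-(v - u * τ u * x)) + τ (-(v - u * τ u * x)) = 0 := by
        rw [map_neg]; linear_combination -hzt
      have hge := hmax _ h2
      rw [show v + -(v - u * τ u * x) = u * τ u * x by ring] at hge
      have hle : ω v ≤ ω (u * τ u * x) := by
        conv_lhs => rw [show v = u * τ u * x + (v - u * τ u * x) by ring]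
        exact key _ _ (Nfix u) hk0 hzt
      exact ⟨ω (u * τ u), ⟨u, hu, rfl⟩,
        by rw [le_antisymm hle hge, ω.map_mul (u * τ u) x, add_comm]⟩
    · rintro ⟨c, ⟨z, hz, rfl⟩, rfl⟩
      refine ⟨z, x * (z * τ z), memH z, mul_ne_zero hxne (Nne z hz), ?_, ω.map_mul _ _⟩
      intro z₀ hz₀
      rw [mul_comm x]
      exact key _ z₀ (Nfix z) (Nne z hz) hz₀
end

section
/- Assume L¹_max ≠ ∅. Then the subgroup of Λ' generated by the set of differences {s − s' : s, s' ∈ S} equals the subgroup ω(L^×); in particular S is contained in this subgroup. -/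
/-- `S` viewed inside `Λ'` (all its values are finite since `v ≠ 0`). -/
def SHval {K L Λ' : Type*} [Field K] [Field L] [Algebra K L] [AddCommGroup Λ'] [LinearOrder Λ'] [IsOrderedAddMonoid Λ']
    (τ : L ≃ₐ[K] L) (ω : AddValuation L (WithTop Λ')) : Set Λ' :=
  {c : Λ' | ∃ u v : L, u * τ u = v + τ v ∧ v ≠ 0 ∧ ω v = (c : WithTop Λ')}

/-- `ω(L^×)` viewed inside `Λ'`. -/
def wLxval {L Λ' : Type*} [Field L] [AddCommGroup Λ'] [LinearOrder Λ'] [IsOrderedAddMonoid Λ']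
    (ω : AddValuation L (WithTop Λ')) : Set Λ' :=
  {c : Λ' | ∃ y : L, y ≠ 0 ∧ ω y = (c : WithTop Λ')}

/-- **Statement 18.** If `L¹_max ≠ ∅`, the subgroup of `Λ'` generated by the differences
`{s − s' : s, s' ∈ S}` is exactly the subgroup `ω(L^×)`; in particular `S` is contained
in this subgroup. -/
theorem statement18 {K L Λ' : Type*} [Field K] [Field L] [Algebra K L]
    [AddCommGroup Λ'] [LinearOrder Λ'] [IsOrderedAddMonoid Λ']
    (τ : L ≃ₐ[K] L) (hτ2 : ∀ x : L, τ (τ x) = x) (hτne : ∃ x : L, τ x ≠ x)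
    (hfix : ∀ x : L, τ x = x ↔ ∃ k : K, algebraMap K L k = x)
    (hrank : Module.finrank K L = 2)
    (ω : AddValuation L (WithTop Λ')) (hωτ : ∀ x : L, ω (τ x) = ω x)
    (hne : (Lmax τ ω (1 : K)).Nonempty) :
    (AddSubgroup.closure {d : Λ' | ∃ s ∈ SHval τ ω, ∃ t ∈ SHval τ ω, d = s - t} : Set Λ') =
      wLxval ω ∧
    SHval τ ω ⊆
      (AddSubgroup.closure {d : Λ' | ∃ s ∈ SHval τ ω, ∃ t ∈ SHval τ ω, d = s - t} : Set Λ') := by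
    classical
  set D : Set Λ' := {d : Λ' | ∃ s ∈ SHval τ ω, ∃ t ∈ SHval τ ω, d = s - t} with hD
  set G := AddSubgroup.closure D with hGdef
  obtain ⟨y, hyT, hymax⟩ := hne
  have hyT1 : y + τ y = 1 := by rw [hyT, map_one]
  have hy0 : y ≠ 0 := by
    intro h
    rw [h, map_zero, add_zero] at hyT1
    exact zero_ne_one hyT1
  -- finiteness of values of nonzero elements
  have hfin : ∀ z : L, z ≠ 0 → ∃ c : Λ', ω z = (c : WithTop Λ') := by
    intro z hz
    rcases WithTop.ne_top_iff_exists.mp (ω.ne_top_iff.mpr hz) with ⟨c, hc⟩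
    exact ⟨c, hc.symm⟩
  -- τ of a nonzero element is nonzero
  have hτ0 : ∀ z : L, z ≠ 0 → τ z ≠ 0 := by
    intro z hz h
    apply hz
    have := congrArg τ h
    rwa [hτ2, map_zero] at this
  -- membership lemmas for SHval
  have memS0 : ∀ z : L, z ≠ 0 → z + τ z = 0 → ∀ c : Λ', ω z = (c : WithTop Λ') →
      c ∈ SHval τ ω := by
    intro z hz hT c hc
    exact ⟨0, z, by rw [zero_mul]; exact hT.symm, hz, hc⟩
  have memS1 : ∀ v : L, v ≠ 0 → v + τ v = 1 → ∀ c : Λ', ω v = (c : WithTop Λ') →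
      c ∈ SHval τ ω := by
    intro v hv hT c hc
    exact ⟨1, v, by rw [map_one, mul_one]; exact hT.symm, hv, hc⟩
  obtain ⟨a, hya⟩ := hfin y hy0
  have haS : a ∈ SHval τ ω := memS1 y hy0 hyT1 a hya
  -- u = z, v = z * τ z * y
  have memSy : ∀ z : L, z ≠ 0 → z + τ z = 0 → ∀ d : Λ', ω z = (d : WithTop Λ') →
      (d + d + a) ∈ SHval τ ω := by
    intro z hz hT d hd
    refine ⟨z, z * τ z * y, ?_, mul_ne_zero (mul_ne_zero hz (hτ0 z hz)) hy0, ?_⟩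
    · have h1 : z * τ z * y + τ (z * τ z * y) = z * τ z * (y + τ y) := by
        rw [map_mul, map_mul, hτ2]; ring
      rw [h1, hyT1, mul_one]
    · rw [ω.map_mul, ω.map_mul, hωτ, hd, hya, ← WithTop.coe_add, ← WithTop.coe_add]
  -- existence of a nonzero trace-zero element
  obtain ⟨x, hx⟩ := hτne
  set z₀ : L := x - τ x with hz₀def
  have hz₀ne : z₀ ≠ 0 := sub_ne_zero.mpr (fun h => hx h.symm)
  have hz₀T : z₀ + τ z₀ = 0 := by rw [hz₀def, map_sub, hτ2]; ring
  obtain ⟨d₀, hd₀⟩ := hfin z₀ hz₀ne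
  -- ω(K^×) ⊆ G
  have hKG : ∀ k : K, k ≠ 0 → ∀ c : Λ', ω (algebraMap K L k) = (c : WithTop Λ') → c ∈ G := by
    intro k hk c hc
    have hk' : algebraMap K L k ≠ 0 := fun h => hk ((algebraMap K L).injective (by rw [h, map_zero]))
    have hz' : algebraMap K L k * z₀ ≠ 0 := mul_ne_zero hk' hz₀ne
    have hz'T : algebraMap K L k * z₀ + τ (algebraMap K L k * z₀) = 0 := by
      rw [map_mul, τ.commutes, ← mul_add, hz₀T, mul_zero]
    have hval : ω (algebraMap K L k * z₀) = ((c + d₀ : Λ') : WithTop Λ') := by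
      rw [ω.map_mul, hc, hd₀, ← WithTop.coe_add]
    have h1 : (c + d₀) ∈ SHval τ ω := memS0 _ hz' hz'T _ hval
    have h2 : d₀ ∈ SHval τ ω := memS0 z₀ hz₀ne hz₀T d₀ hd₀
    have : c ∈ D := ⟨c + d₀, h1, d₀, h2, by abel⟩
    exact AddSubgroup.subset_closure this
  -- a - ω(z) ∈ G for trace-zero z ≠ 0
  have hF1 : ∀ z : L, z ≠ 0 → z + τ z = 0 → ∀ d : Λ', ω z = (d : WithTop Λ') →
      a - d ∈ G := by
    intro z hz hT d hd
    have hτz : τ z = -z := eq_neg_of_add_eq_zero_right hT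
    have h1 : (d + d + a) ∈ SHval τ ω := memSy z hz hT d hd
    have hz3 : z * z * z ≠ 0 := mul_ne_zero (mul_ne_zero hz hz) hz
    have hz3T : z * z * z + τ (z * z * z) = 0 := by
      rw [map_mul, map_mul, hτz]; ring
    have hz3v : ω (z * z * z) = ((d + d + d : Λ') : WithTop Λ') := by
      rw [ω.map_mul, ω.map_mul, hd, ← WithTop.coe_add, ← WithTop.coe_add]
    have h2 : (d + d + d) ∈ SHval τ ω := memS0 _ hz3 hz3T _ hz3v
    exact AddSubgroup.subset_closure ⟨d + d + a, h1, d + d + d, h2, by abel⟩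
  -- the key step: a = ω(y) ∈ G, using maximality of y
  have haG : a ∈ G := by
    by_cases h2 : (2 : L) = 0
    · have h1T : (1 : L) + τ 1 = 0 := by rw [map_one, one_add_one_eq_two, h2]
      have h1v : ω (1 : L) = ((0 : Λ') : WithTop Λ') := by
        rw [ω.map_one, WithTop.coe_zero]
      have := hF1 1 one_ne_zero h1T 0 h1v
      rwa [sub_zero] at this
    · have halg2 : algebraMap K L 2 = 2 := map_ofNat _ 2
      have h2K : (2 : K) ≠ 0 := fun h => h2 (by rw [← halg2, h, map_zero])
      set e : K := (2 : K)⁻¹ with hedef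
      have he : algebraMap K L e = (2 : L)⁻¹ := by rw [hedef, map_inv₀, halg2]
      have he0 : e ≠ 0 := inv_ne_zero h2K
      have h2inv0 : (2 : L)⁻¹ ≠ 0 := inv_ne_zero h2
      have hτinv : τ (2 : L)⁻¹ = (2 : L)⁻¹ := by rw [← he, τ.commutes]
      set z : L := y - (2 : L)⁻¹ with hzdef
      have h22 : (2 : L)⁻¹ + (2 : L)⁻¹ = 1 := by rw [← two_mul, mul_inv_cancel₀ h2]
      have hzT : z + τ z = 0 := by
        rw [hzdef, map_sub, hτinv]
        linear_combination hyT1 - h22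
      obtain ⟨κ, hκ⟩ := hfin ((2 : L)⁻¹) h2inv0
      have hκK : ω (algebraMap K L e) = (κ : WithTop Λ') := by rw [he]; exact hκ
      by_cases hz0 : z = 0
      · have hy2 : y = algebraMap K L e := by
          rw [he]; exact sub_eq_zero.mp (hzdef ▸ hz0)
        exact hKG e he0 a (by rw [← hy2]; exact hya)
      · obtain ⟨d, hd⟩ := hfin z hz0
        have hκa : κ ≤ a := by
          have hmz : (-z) + τ (-z) = 0 := by rw [map_neg, ← neg_add, hzT, neg_zero]
          have hmax := hymax (-z) hmz
          have hy2 : y + -z = (2 : L)⁻¹ := by rw [hzdef]; ring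
          rw [hy2, hκ, hya] at hmax
          exact_mod_cast hmax
        have hysum : y = (2 : L)⁻¹ + z := by rw [hzdef]; ring
        rcases lt_trichotomy d κ with hlt | heq | hgt
        · exfalso
          have hne' : ω ((2 : L)⁻¹) ≠ ω z := by
            rw [hκ, hd]
            intro h
            exact (ne_of_gt hlt) (WithTop.coe_injective h)
          have hmin := ω.map_add_of_distinct_val hne'
          rw [← hysum, hya, hκ, hd] at hmin
          have : (a : WithTop Λ') = (d : WithTop Λ') := by
            rw [hmin, min_eq_right (by exact_mod_cast hlt.le)]
          have had : a = d := WithTop.coe_injective this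
          exact absurd (had ▸ hκa) (not_le.mpr (had ▸ hlt))
        · have h1 : a - d ∈ G := hF1 z hz0 hzT d hd
          have h2' : d ∈ G := by
            have := hKG e he0 κ hκK
            rwa [← heq] at this
          have : a = (a - d) + d := by abel
          rw [this]
          exact add_mem h1 h2'
        · have hne' : ω ((2 : L)⁻¹) ≠ ω z := by
            rw [hκ, hd]
            intro h
            exact (ne_of_lt hgt) (WithTop.coe_injective h)
          have hmin := ω.map_add_of_distinct_val hne'
          rw [← hysum, hya, hκ, hd] at hmin
          have : a = κ := WithTop.coe_injective
            (by rw [hmin, min_eq_left (by exact_mod_cast hgt.le)])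
          exact this ▸ hKG e he0 κ hκK
  -- S ⊆ G
  have hSsubG : SHval τ ω ⊆ (G : Set Λ') := by
    intro s hs
    have h1 : s - a ∈ G := AddSubgroup.subset_closure ⟨s, hs, a, haS, rfl⟩
    have : s = (s - a) + a := by abel
    rw [this]
    exact add_mem h1 haG
  -- ω(L^×) ⊆ G
  have hLsubG : wLxval ω ⊆ (G : Set Λ') := by
    rintro c ⟨w, hw, hwc⟩
    have hfixw : τ (w + τ w) = w + τ w := by rw [map_add, hτ2]; ring
    obtain ⟨k, hk⟩ := (hfix _).mp hfixw
    by_cases hk0 : k = 0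
    · have hwT : w + τ w = 0 := by rw [← hk, hk0, map_zero]
      have h1 : a - c ∈ G := hF1 w hw hwT c hwc
      have : c = a - (a - c) := by abel
      rw [this]
      exact sub_mem haG h1
    · have hk' : algebraMap K L k ≠ 0 :=
        fun h => hk0 ((algebraMap K L).injective (by rw [h, map_zero]))
      set v : L := w * (algebraMap K L k)⁻¹ with hvdef
      have hv0 : v ≠ 0 := mul_ne_zero hw (inv_ne_zero hk')
      have hvT : v + τ v = 1 := by
        have h1 : v + τ v = (w + τ w) * (algebraMap K L k)⁻¹ := by
          rw [hvdef, map_mul, map_inv₀, τ.commutes]; ring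
        rw [h1, ← hk, mul_inv_cancel₀ hk']
      obtain ⟨s', hs'⟩ := hfin v hv0
      obtain ⟨κ', hκ'⟩ := hfin _ hk'
      have hwv : algebraMap K L k * v = w := by
        rw [hvdef]
        field_simp
      have hcomp : c = κ' + s' := by
        have : ω w = ((κ' + s' : Λ') : WithTop Λ') := by
          rw [← hwv, ω.map_mul, hκ', hs', ← WithTop.coe_add]
        rw [hwc] at this
        exact WithTop.coe_injective this
      rw [hcomp]
      exact add_mem (hKG k hk0 κ' hκ') (hSsubG (memS1 v hv0 hvT s' hs'))
  -- G ⊆ ω(L^×)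
  have hGsubL : (G : Set Λ') ⊆ wLxval ω := by
    have hW : ∃ W : AddSubgroup Λ', (W : Set Λ') = wLxval ω := by
      refine ⟨{ carrier := wLxval ω
                zero_mem' := ⟨1, one_ne_zero, by rw [ω.map_one, WithTop.coe_zero]⟩
                add_mem' := ?_
                neg_mem' := ?_ }, rfl⟩
      · rintro p q ⟨y₁, h₁, e₁⟩ ⟨y₂, h₂, e₂⟩
        exact ⟨y₁ * y₂, mul_ne_zero h₁ h₂, by rw [ω.map_mul, e₁, e₂, ← WithTop.coe_add]⟩
      · rintro p ⟨y₁, h₁, e₁⟩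
        refine ⟨y₁⁻¹, inv_ne_zero h₁, ?_⟩
        rw [ω.map_inv, e₁]
        rfl
    obtain ⟨W, hWc⟩ := hW
    have hgen : D ⊆ (W : Set Λ') := by
      rintro d ⟨s, ⟨u1, v1, hH1, hv1, he1⟩, t, ⟨u2, v2, hH2, hv2, he2⟩, rfl⟩
      rw [hWc]
      refine ⟨v1 * v2⁻¹, mul_ne_zero hv1 (inv_ne_zero hv2), ?_⟩
      rw [ω.map_mul, ω.map_inv, he1, he2, sub_eq_add_neg, WithTop.coe_add]
      rfl
    have hle : G ≤ W := AddSubgroup.closure_le W |>.mpr hgen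
    intro c hc
    rw [← hWc]
    exact hle hc
  exact ⟨Set.Subset.antisymm hGsubL hLsubG, hSsubG⟩
end
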